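/- arXiv:1202.0972 — 12 statements merged into one kernel-verified Lean document; each statement's English description precedes it below -/
import Mathlib

section
/- For every P ∈ ℂ³, the dual mass norm minus the normal component equals twice the kinetic energy: m·(|P₁₂|²/(m₁m₂) + |P₃₁|²/(m₃m₁) + |P₂₃|²/(m₂m₃)) − |m₃·conj(P₁₂)·1 + m₂·conj(P₃₁)·1 + m₁·conj(P₂₃)·1|²/(m₁m₂m₃) = 2K(P); equivalently, |P|²_* − |⟨P,N⟩|²/|N|²ₘ = 2K(P), where N = (m₃,m₂,m₁) and |N|²ₘ = m₁m₂m₃. -/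
noncomputable section
open Complex ComplexConjugate

/-- Kinetic energy form `K(P)`. -/
def KE (m₁ m₂ m₃ : ℝ) (P : ℂ × ℂ × ℂ) : ℝ :=
  Complex.normSq (P.1 - P.2.1) / (2 * m₁) + Complex.normSq (P.2.2 - P.1) / (2 * m₂) +
    Complex.normSq (P.2.1 - P.2.2) / (2 * m₃)

/-- the dual mass norm minus the normal component equals twice the
kinetic energy: `|P|²_* − |⟨P,N⟩|²/|N|²ₘ = 2K(P)` with `N = (m₃,m₂,m₁)`,
`|N|²ₘ = m₁m₂m₃`. -/
theorem stmt2 (m₁ m₂ m₃ : ℝ) (hm₁ : 0 < m₁) (hm₂ : 0 < m₂) (hm₃ : 0 < m₃)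
    (P : ℂ × ℂ × ℂ) :
    (m₁ + m₂ + m₃) *
        (Complex.normSq P.1 / (m₁ * m₂) + Complex.normSq P.2.1 / (m₃ * m₁) +
          Complex.normSq P.2.2 / (m₂ * m₃)) -
      Complex.normSq ((m₃ : ℂ) * conj P.1 * 1 + (m₂ : ℂ) * conj P.2.1 * 1 +
          (m₁ : ℂ) * conj P.2.2 * 1) / (m₁ * m₂ * m₃)
      = 2 * KE m₁ m₂ m₃ P := by
  obtain ⟨a, b, c⟩ := P
  simp only [KE, Complex.normSq_apply, Complex.add_re, Complex.add_im, Complex.mul_re,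
    Complex.mul_im, Complex.sub_re, Complex.sub_im, Complex.ofReal_re, Complex.ofReal_im,
    Complex.conj_re, Complex.conj_im, Complex.one_re, Complex.one_im]
  field_simp
  ring
end
end

section
/- For every Q ∈ W with Q ≠ 0 and every P ∈ ℂ³: |⟨P,Q⟩|²/|Q|² + |⟨P,T(Q)⟩|²/|T(Q)|² = 2K(P), where ⟨·,·⟩ is the Hermitian evaluation pairing, |Q| and |T(Q)| are mass norms, and T(Q) = (conj(Q₃₁)/m₂ − conj(Q₂₃)/m₁, conj(Q₂₃)/m₁ − conj(Q₁₂)/m₃, conj(Q₁₂)/m₃ − conj(Q₃₁)/m₂). (In particular T(Q) ≠ 0 for Q ∈ W∖{0}, so both denominators are nonzero.) -/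
set_option maxHeartbeats 4000000

noncomputable section
open Complex ComplexConjugate

def epair (P Q : ℂ × ℂ × ℂ) : ℂ :=
  conj P.1 * Q.1 + conj P.2.1 * Q.2.1 + conj P.2.2 * Q.2.2

def massSq (m₁ m₂ m₃ : ℝ) (Q : ℂ × ℂ × ℂ) : ℝ :=
  (m₁ * m₂ * Complex.normSq Q.1 + m₃ * m₁ * Complex.normSq Q.2.1 +
    m₂ * m₃ * Complex.normSq Q.2.2) / (m₁ + m₂ + m₃)

def Tvec (m₁ m₂ m₃ : ℝ) (Q : ℂ × ℂ × ℂ) : ℂ × ℂ × ℂ :=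
  (conj Q.2.1 / (m₂ : ℂ) - conj Q.2.2 / (m₁ : ℂ),
   conj Q.2.2 / (m₁ : ℂ) - conj Q.1 / (m₃ : ℂ),
   conj Q.1 / (m₃ : ℂ) - conj Q.2.1 / (m₂ : ℂ))

/-- for `Q ∈ W ∖ {0}` and any `P`,
`|⟨P,Q⟩|²/|Q|² + |⟨P,T(Q)⟩|²/|T(Q)|² = 2K(P)`, and `T(Q) ≠ 0`. -/
theorem stmt3 (m₁ m₂ m₃ : ℝ) (hm₁ : 0 < m₁) (hm₂ : 0 < m₂) (hm₃ : 0 < m₃)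
    (Q P : ℂ × ℂ × ℂ) (hW : Q.1 + Q.2.1 + Q.2.2 = 0) (hQ : Q ≠ 0) :
    Tvec m₁ m₂ m₃ Q ≠ 0 ∧
    Complex.normSq (epair P Q) / massSq m₁ m₂ m₃ Q +
      Complex.normSq (epair P (Tvec m₁ m₂ m₃ Q)) / massSq m₁ m₂ m₃ (Tvec m₁ m₂ m₃ Q)
      = 2 * KE m₁ m₂ m₃ P := by
  obtain ⟨a, b, c⟩ := Q
  obtain ⟨p, q, r⟩ := P
  simp only at hW
  have hc : c = -a - b := by linear_combination hW
  subst hc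
  have c1 : (m₁ : ℂ) ≠ 0 := by exact_mod_cast hm₁.ne'
  have c2 : (m₂ : ℂ) ≠ 0 := by exact_mod_cast hm₂.ne'
  have c3 : (m₃ : ℂ) ≠ 0 := by exact_mod_cast hm₃.ne'
  have hm : (0:ℝ) < m₁ + m₂ + m₃ := by linarith
  -- a ≠ 0 ∨ b ≠ 0
  have hab : a ≠ 0 ∨ b ≠ 0 := by
    by_contra h
    push_neg at h
    apply hQ
    simp [h.1, h.2, Prod.ext_iff]
  have hT : Tvec m₁ m₂ m₃ (a, b, -a - b) ≠ 0 := by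
    intro h
    simp only [Tvec, Prod.ext_iff, Prod.mk.injEq, Prod.fst_zero, Prod.snd_zero, map_sub, map_neg] at h
    obtain ⟨h1, h2, h3⟩ := h
    have ha0 : conj a = 0 := by
      have : (m₃ : ℂ) * (m₁ + m₂ + m₃) * conj a = 0 := by
        have e2 : (m₃:ℂ) * (-conj a - conj b) = m₁ * conj a := by
          field_simp at h2
          linear_combination h2
        have e3 : (m₂:ℂ) * conj a = m₃ * conj b := by
          field_simp at h3
          linear_combination h3
        linear_combination (-(m₃:ℂ)) * e2 + (m₃:ℂ) * e3
      have hne : (m₃ : ℂ) * (m₁ + m₂ + m₃) ≠ 0 := by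
        apply mul_ne_zero c3
        exact_mod_cast hm.ne'
      exact (mul_eq_zero.mp this).resolve_left hne
    have hb0 : conj b = 0 := by
      have e3 : (m₂:ℂ) * conj a = m₃ * conj b := by
        field_simp at h3
        linear_combination h3
      rw [ha0] at e3
      have := e3.symm
      simp only [mul_zero] at this
      exact (mul_eq_zero.mp this).resolve_left c3
    have ha : a = 0 := by
      have := congrArg conj ha0; simpa using this
    have hb : b = 0 := by
      have := congrArg conj hb0; simpa using this
    exact hab.elim (fun h => h ha) (fun h => h hb)
  refine ⟨hT, ?_⟩
  have hNQ : (0:ℝ) < m₁ * m₂ * Complex.normSq a + m₃ * m₁ * Complex.normSq b +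
      m₂ * m₃ * Complex.normSq (-a - b) := by
    rcases hab with ha | hb
    · have t1 : 0 < m₁ * m₂ * Complex.normSq a :=
        mul_pos (mul_pos hm₁ hm₂) (Complex.normSq_pos.mpr ha)
      have t2 : 0 ≤ m₃ * m₁ * Complex.normSq b :=
        mul_nonneg (by positivity) (Complex.normSq_nonneg _)
      have t3 : 0 ≤ m₂ * m₃ * Complex.normSq (-a - b) :=
        mul_nonneg (by positivity) (Complex.normSq_nonneg _)
      linarith
    · have t1 : 0 < m₃ * m₁ * Complex.normSq b :=
        mul_pos (mul_pos hm₃ hm₁) (Complex.normSq_pos.mpr hb)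
      have t2 : 0 ≤ m₁ * m₂ * Complex.normSq a :=
        mul_nonneg (by positivity) (Complex.normSq_nonneg _)
      have t3 : 0 ≤ m₂ * m₃ * Complex.normSq (-a - b) :=
        mul_nonneg (by positivity) (Complex.normSq_nonneg _)
      linarith
  have hM : (0:ℝ) < massSq m₁ m₂ m₃ (a, b, -a - b) := div_pos hNQ hm
  have hbr : (m₁ + m₂ + m₃) * massSq m₁ m₂ m₃ (a, b, -a - b) =
      m₁ * m₂ * Complex.normSq a + m₃ * m₁ * Complex.normSq b +
        m₂ * m₃ * Complex.normSq (-a - b) := by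
    rw [massSq, mul_comm, div_mul_cancel₀ _ hm.ne']
  have e1 : conj b / (m₂:ℂ) - conj (-a - b) / (m₁:ℂ) =
      (conj b * ↑m₁ - ↑m₂ * conj (-a - b)) / (↑m₂ * ↑m₁) := div_sub_div _ _ c2 c1
  have e2 : conj (-a - b) / (m₁:ℂ) - conj a / (m₃:ℂ) =
      (conj (-a - b) * ↑m₃ - ↑m₁ * conj a) / (↑m₁ * ↑m₃) := div_sub_div _ _ c1 c3
  have e3 : conj a / (m₃:ℂ) - conj b / (m₂:ℂ) =
      (conj a * ↑m₂ - ↑m₃ * conj b) / (↑m₃ * ↑m₂) := div_sub_div _ _ c3 c2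
  have n1 : Complex.normSq ((m₂:ℂ) * ↑m₁) = (m₂ * m₁)^2 := by
    simp [Complex.normSq_mul, Complex.normSq_ofReal]; ring
  have n2 : Complex.normSq ((m₁:ℂ) * ↑m₃) = (m₁ * m₃)^2 := by
    simp [Complex.normSq_mul, Complex.normSq_ofReal]; ring
  have n3 : Complex.normSq ((m₃:ℂ) * ↑m₂) = (m₃ * m₂)^2 := by
    simp [Complex.normSq_mul, Complex.normSq_ofReal]; ring
  have hrelNT : (m₁ * m₂ * m₃) * (m₁ * m₂ *
        Complex.normSq (Tvec m₁ m₂ m₃ (a, b, -a - b)).1 +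
      m₃ * m₁ * Complex.normSq (Tvec m₁ m₂ m₃ (a, b, -a - b)).2.1 +
      m₂ * m₃ * Complex.normSq (Tvec m₁ m₂ m₃ (a, b, -a - b)).2.2) =
      (m₁ + m₂ + m₃) * (m₁ * m₂ * Complex.normSq a + m₃ * m₁ * Complex.normSq b +
        m₂ * m₃ * Complex.normSq (-a - b)) := by
    simp only [Tvec]
    rw [e1, e2, e3, Complex.normSq_div, Complex.normSq_div, Complex.normSq_div, n1, n2, n3]
    field_simp
    rw [← Complex.ofReal_inj]
    push_cast
    simp only [← Complex.mul_conj]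
    simp only [map_add, map_sub, map_mul, map_neg, Complex.conj_conj, Complex.conj_ofReal]
    ring
  have hrelN : (m₁ * m₂ * m₃) * massSq m₁ m₂ m₃ (Tvec m₁ m₂ m₃ (a, b, -a - b)) =
      (m₁ + m₂ + m₃) * massSq m₁ m₂ m₃ (a, b, -a - b) := by
    simp only [massSq]
    rw [← mul_div_assoc, ← mul_div_assoc, hrelNT]
  have hN : (0:ℝ) < massSq m₁ m₂ m₃ (Tvec m₁ m₂ m₃ (a, b, -a - b)) := by
    have hk : (0:ℝ) < m₁ * m₂ * m₃ := by positivity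
    nlinarith [mul_pos hm hM, hrelN]
  -- single-fraction form of `epair P (Tvec Q)`
  have hepT : epair (p, q, r) (Tvec m₁ m₂ m₃ (a, b, -a - b)) =
      (conj p * (↑m₃ * (conj b * ↑m₁ - ↑m₂ * conj (-a - b))) +
       conj q * (↑m₂ * (conj (-a - b) * ↑m₃ - ↑m₁ * conj a)) +
       conj r * (↑m₁ * (conj a * ↑m₂ - ↑m₃ * conj b))) / (↑m₁ * ↑m₂ * ↑m₃) := by
    simp only [epair, Tvec]
    rw [e1, e2, e3]
    field_simp
  have hB : Complex.normSq (epair (p, q, r) (Tvec m₁ m₂ m₃ (a, b, -a - b))) =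
      Complex.normSq (conj p * (↑m₃ * (conj b * ↑m₁ - ↑m₂ * conj (-a - b))) +
       conj q * (↑m₂ * (conj (-a - b) * ↑m₃ - ↑m₁ * conj a)) +
       conj r * (↑m₁ * (conj a * ↑m₂ - ↑m₃ * conj b))) / (m₁ * m₂ * m₃)^2 := by
    rw [hepT, Complex.normSq_div]
    congr 1
    simp [Complex.normSq_mul, Complex.normSq_ofReal]
    ring
  have key : Complex.normSq (epair (p, q, r) (a, b, -a - b)) * (m₁ + m₂ + m₃) +
      Complex.normSq (epair (p, q, r) (Tvec m₁ m₂ m₃ (a, b, -a - b))) * (m₁ * m₂ * m₃) =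
      2 * KE m₁ m₂ m₃ (p, q, r) * (m₁ * m₂ * Complex.normSq a + m₃ * m₁ * Complex.normSq b +
        m₂ * m₃ * Complex.normSq (-a - b)) := by
    rw [hB]
    simp only [epair, KE]
    field_simp
    rw [← Complex.ofReal_inj]
    push_cast
    simp only [← Complex.mul_conj]
    simp only [map_add, map_sub, map_mul, map_neg, Complex.conj_conj, Complex.conj_ofReal]
    ring
  rw [div_add_div _ _ hM.ne' hN.ne', div_eq_iff (mul_pos hM hN).ne']
  apply mul_right_cancel₀ (show ((m₁ + m₂ + m₃) * (m₁ * m₂ * m₃) : ℝ) ≠ 0 by positivity)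
  linear_combination
    ((m₁ * m₂ * m₃) * massSq m₁ m₂ m₃ (Tvec m₁ m₂ m₃ (a, b, -a - b))) * key -
    (Complex.normSq (epair (p, q, r) (Tvec m₁ m₂ m₃ (a, b, -a - b))) * (m₁ * m₂ * m₃)) * hrelN -
    (2 * KE m₁ m₂ m₃ (p, q, r) * (m₁ * m₂ * m₃) *
      massSq m₁ m₂ m₃ (Tvec m₁ m₂ m₃ (a, b, -a - b))) * hbr
end
end

section
/- Let Q ∈ W, N = (m₃,m₂,m₁), and T(Q) = (conj(Q₃₁)/m₂ − conj(Q₂₃)/m₁, conj(Q₂₃)/m₁ − conj(Q₁₂)/m₃, conj(Q₁₂)/m₃ − conj(Q₃₁)/m₂). Then: (i) Q, N and T(Q) are pairwise orthogonal with respect to the Hermitian mass metric, i.e. ⟨Q,N⟩ₘ = ⟨Q,T(Q)⟩ₘ = ⟨N,T(Q)⟩ₘ = 0; (ii) T(Q) ∈ W; (iii) |T(Q)|² = (m/(m₁m₂m₃))·|Q|² (mass norms); and (iv) if Q ≠ 0 then T(Q) ≠ 0 and {Q, N, T(Q)} is a ℂ-basis of ℂ³. -/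
noncomputable section
open Complex ComplexConjugate

/-- Hermitian mass metric `⟨V,W⟩ₘ`. -/
def massInner (m₁ m₂ m₃ : ℝ) (V W : ℂ × ℂ × ℂ) : ℂ :=
  ((m₁ * m₂ : ℝ) : ℂ) * conj V.1 * W.1 / ((m₁ + m₂ + m₃ : ℝ) : ℂ) +
    ((m₃ * m₁ : ℝ) : ℂ) * conj V.2.1 * W.2.1 / ((m₁ + m₂ + m₃ : ℝ) : ℂ) +
    ((m₂ * m₃ : ℝ) : ℂ) * conj V.2.2 * W.2.2 / ((m₁ + m₂ + m₃ : ℝ) : ℂ)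

lemma massInner_comb (m₁ m₂ m₃ : ℝ) (V A B C : ℂ × ℂ × ℂ) (x y z : ℂ) :
    massInner m₁ m₂ m₃ V (x • A + y • B + z • C) =
      x * massInner m₁ m₂ m₃ V A + y * massInner m₁ m₂ m₃ V B + z * massInner m₁ m₂ m₃ V C := by
  simp [massInner]
  ring

lemma massInner_self (m₁ m₂ m₃ : ℝ) (V : ℂ × ℂ × ℂ) :
    massInner m₁ m₂ m₃ V V = (massSq m₁ m₂ m₃ V : ℂ) := by
  simp only [massInner, massSq]
  push_cast [Complex.normSq_eq_conj_mul_self]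
  ring

lemma massInner_conj_symm (m₁ m₂ m₃ : ℝ) (V W : ℂ × ℂ × ℂ) :
    massInner m₁ m₂ m₃ V W = conj (massInner m₁ m₂ m₃ W V) := by
  simp only [massInner, map_add, map_div₀, map_mul, Complex.conj_conj, Complex.conj_ofReal]
  ring

lemma massSq_pos (m₁ m₂ m₃ : ℝ) (hm₁ : 0 < m₁) (hm₂ : 0 < m₂) (hm₃ : 0 < m₃)
    (V : ℂ × ℂ × ℂ) (hV : V ≠ 0) : 0 < massSq m₁ m₂ m₃ V := by
  have h : V.1 ≠ 0 ∨ V.2.1 ≠ 0 ∨ V.2.2 ≠ 0 := by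
    by_contra h
    push_neg at h
    exact hV (Prod.ext h.1 (Prod.ext h.2.1 h.2.2))
  have hm : 0 < m₁ + m₂ + m₃ := by linarith
  apply div_pos _ hm
  have n1 : 0 ≤ m₁ * m₂ * Complex.normSq V.1 :=
    mul_nonneg (mul_pos hm₁ hm₂).le (Complex.normSq_nonneg _)
  have n2 : 0 ≤ m₃ * m₁ * Complex.normSq V.2.1 :=
    mul_nonneg (mul_pos hm₃ hm₁).le (Complex.normSq_nonneg _)
  have n3 : 0 ≤ m₂ * m₃ * Complex.normSq V.2.2 :=
    mul_nonneg (mul_pos hm₂ hm₃).le (Complex.normSq_nonneg _)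
  rcases h with h | h | h
  · have := Complex.normSq_pos.2 h
    nlinarith [mul_pos (mul_pos hm₁ hm₂) this]
  · have := Complex.normSq_pos.2 h
    nlinarith [mul_pos (mul_pos hm₃ hm₁) this]
  · have := Complex.normSq_pos.2 h
    nlinarith [mul_pos (mul_pos hm₂ hm₃) this]

lemma h5aux (m₁ m₂ m₃ : ℝ) (hm₁ : 0 < m₁) (hm₂ : 0 < m₂) (hm₃ : 0 < m₃)
    (Q : ℂ × ℂ × ℂ) (hW : Q.1 + Q.2.1 + Q.2.2 = 0) :
    massSq m₁ m₂ m₃ (Tvec m₁ m₂ m₃ Q) =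
      (m₁ + m₂ + m₃) / (m₁ * m₂ * m₃) * massSq m₁ m₂ m₃ Q := by
  obtain ⟨a, b, c⟩ := Q
  have hc : c = -a - b := by linear_combination hW
  subst hc
  simp only [massSq, Tvec, Complex.normSq_apply, Complex.sub_re, Complex.sub_im,
    Complex.div_re, Complex.div_im, Complex.conj_re, Complex.conj_im, Complex.neg_re,
    Complex.neg_im, Complex.add_re, Complex.add_im, Complex.ofReal_re, Complex.ofReal_im,
    Complex.normSq_ofReal, map_sub, map_neg, map_add]
  have h1 : m₁ ≠ 0 := hm₁.ne'
  have h2 : m₂ ≠ 0 := hm₂.ne'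
  have h3 : m₃ ≠ 0 := hm₃.ne'
  have hm : m₁ + m₂ + m₃ ≠ 0 := by positivity
  field_simp
  ring

/-- for `Q ∈ W`, with `N = (m₃,m₂,m₁)` and `T = T(Q)`:
(i) `Q ⊥ N`, `Q ⊥ T`, `N ⊥ T` for the mass metric, (ii) `T ∈ W`,
(iii) `|T|² = (m/(m₁m₂m₃))|Q|²`, (iv) if `Q ≠ 0` then `T ≠ 0` and
`{Q, N, T}` is a ℂ-basis of ℂ³. -/
theorem stmt4 (m₁ m₂ m₃ : ℝ) (hm₁ : 0 < m₁) (hm₂ : 0 < m₂) (hm₃ : 0 < m₃)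
    (Q : ℂ × ℂ × ℂ) (hW : Q.1 + Q.2.1 + Q.2.2 = 0) :
    let N : ℂ × ℂ × ℂ := ((m₃ : ℂ), (m₂ : ℂ), (m₁ : ℂ))
    let T : ℂ × ℂ × ℂ := Tvec m₁ m₂ m₃ Q
    -- (i)
    massInner m₁ m₂ m₃ Q N = 0 ∧ massInner m₁ m₂ m₃ Q T = 0 ∧
      massInner m₁ m₂ m₃ N T = 0 ∧
    -- (ii)
    T.1 + T.2.1 + T.2.2 = 0 ∧
    -- (iii)
    massSq m₁ m₂ m₃ T = ((m₁ + m₂ + m₃) / (m₁ * m₂ * m₃)) * massSq m₁ m₂ m₃ Q ∧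
    -- (iv)
    (Q ≠ 0 → T ≠ 0 ∧
      ∀ v : ℂ × ℂ × ℂ, ∃! c : ℂ × ℂ × ℂ, v = c.1 • Q + c.2.1 • N + c.2.2 • T) := by

  intro N T
  have hc1 : (m₁ : ℂ) ≠ 0 := Complex.ofReal_ne_zero.2 hm₁.ne'
  have hc2 : (m₂ : ℂ) ≠ 0 := Complex.ofReal_ne_zero.2 hm₂.ne'
  have hc3 : (m₃ : ℂ) ≠ 0 := Complex.ofReal_ne_zero.2 hm₃.ne'
  have hmr : (0:ℝ) < m₁ + m₂ + m₃ := by linarith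
  have hmc : ((m₁ + m₂ + m₃ : ℝ) : ℂ) ≠ 0 := Complex.ofReal_ne_zero.2 hmr.ne'
  have hWc : conj Q.1 + conj Q.2.1 + conj Q.2.2 = 0 := by
    rw [← map_add, ← map_add, hW, map_zero]
  have h1 : massInner m₁ m₂ m₃ Q N = 0 := by
    simp only [massInner, N, ← add_div, div_eq_zero_iff]
    left
    push_cast
    linear_combination ((m₁:ℂ) * m₂ * m₃) * hWc
  have h2 : massInner m₁ m₂ m₃ Q T = 0 := by
    simp only [massInner, Tvec, T, ← add_div, div_eq_zero_iff]
    left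
    field_simp
    push_cast
    ring
  have h3 : massInner m₁ m₂ m₃ N T = 0 := by
    simp only [massInner, Tvec, T, N, Complex.conj_ofReal, ← add_div, div_eq_zero_iff]
    left
    field_simp
    push_cast
    ring
  have h4 : T.1 + T.2.1 + T.2.2 = 0 := by
    simp only [Tvec, T]
    ring
  have h5 : massSq m₁ m₂ m₃ T = (m₁ + m₂ + m₃) / (m₁ * m₂ * m₃) * massSq m₁ m₂ m₃ Q :=
    h5aux m₁ m₂ m₃ hm₁ hm₂ hm₃ Q hW
  refine ⟨h1, h2, h3, h4, h5, fun hQ => ?_⟩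
  have hT : T ≠ 0 := by
    intro hT0
    have e1 : T.1 = 0 := by rw [hT0]; rfl
    have e2 : T.2.1 = 0 := by rw [hT0]; rfl
    simp only [Tvec, T] at e1 e2
    have e1' : (m₁ : ℂ) * conj Q.2.1 - (m₂ : ℂ) * conj Q.2.2 = 0 := by
      rw [sub_eq_zero, div_eq_div_iff hc2 hc1] at e1
      linear_combination e1
    have e2' : (m₃ : ℂ) * conj Q.2.2 - (m₁ : ℂ) * conj Q.1 = 0 := by
      rw [sub_eq_zero, div_eq_div_iff hc1 hc3] at e2
      linear_combination e2
    have hw : ((m₁ + m₂ + m₃ : ℝ) : ℂ) * conj Q.2.2 = 0 := by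
      push_cast
      linear_combination (m₁ : ℂ) * hWc - e1' + e2'
    have hz3 : conj Q.2.2 = 0 := by
      rcases mul_eq_zero.1 hw with h | h
      · exact absurd h hmc
      · exact h
    have hz1 : conj Q.1 = 0 := by
      have h := e2'
      rw [hz3] at h
      simp only [mul_zero, zero_sub, neg_eq_zero] at h
      rcases mul_eq_zero.1 h with h' | h'
      · exact absurd h' hc1
      · exact h'
    have hz2 : conj Q.2.1 = 0 := by
      have h := e1'
      rw [hz3] at h
      simp only [mul_zero, sub_zero] at h
      rcases mul_eq_zero.1 h with h' | h'
      · exact absurd h' hc1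
      · exact h'
    apply hQ
    have a1 : Q.1 = 0 := by simpa using congrArg conj hz1
    have a2 : Q.2.1 = 0 := by simpa using congrArg conj hz2
    have a3 : Q.2.2 = 0 := by simpa using congrArg conj hz3
    exact Prod.ext a1 (Prod.ext a2 a3)
  refine ⟨hT, ?_⟩
  have hN : N ≠ 0 := by
    intro h
    have h' : N.1 = 0 := by rw [h]; rfl
    exact hc3 h'
  set f : (ℂ × ℂ × ℂ) →ₗ[ℂ] (ℂ × ℂ × ℂ) :=
    { toFun := fun c => c.1 • Q + c.2.1 • N + c.2.2 • T
      map_add' := by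
        intro x y
        show (x.1 + y.1) • Q + (x.2.1 + y.2.1) • N + (x.2.2 + y.2.2) • T = _
        module
      map_smul' := by
        intro r x
        show (r * x.1) • Q + (r * x.2.1) • N + (r * x.2.2) • T = _
        simp only [RingHom.id_apply]
        module } with hf
  have hQQ : massInner m₁ m₂ m₃ Q Q = (massSq m₁ m₂ m₃ Q : ℂ) := massInner_self _ _ _ _
  have hNN : massInner m₁ m₂ m₃ N N = (massSq m₁ m₂ m₃ N : ℂ) := massInner_self _ _ _ _
  have hTT : massInner m₁ m₂ m₃ T T = (massSq m₁ m₂ m₃ T : ℂ) := massInner_self _ _ _ _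
  have hNQ : massInner m₁ m₂ m₃ N Q = 0 := by
    rw [massInner_conj_symm, h1, map_zero]
  have hTQ : massInner m₁ m₂ m₃ T Q = 0 := by
    rw [massInner_conj_symm, h2, map_zero]
  have hTN : massInner m₁ m₂ m₃ T N = 0 := by
    rw [massInner_conj_symm, h3, map_zero]
  have pQ : (massSq m₁ m₂ m₃ Q : ℂ) ≠ 0 :=
    Complex.ofReal_ne_zero.2 (massSq_pos m₁ m₂ m₃ hm₁ hm₂ hm₃ Q hQ).ne'
  have pN : (massSq m₁ m₂ m₃ N : ℂ) ≠ 0 :=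
    Complex.ofReal_ne_zero.2 (massSq_pos m₁ m₂ m₃ hm₁ hm₂ hm₃ N hN).ne'
  have pT : (massSq m₁ m₂ m₃ T : ℂ) ≠ 0 :=
    Complex.ofReal_ne_zero.2 (massSq_pos m₁ m₂ m₃ hm₁ hm₂ hm₃ T hT).ne'
  have hinj : Function.Injective f := by
    rw [injective_iff_map_eq_zero]
    intro z hz
    have hz' : z.1 • Q + z.2.1 • N + z.2.2 • T = (0 : ℂ × ℂ × ℂ) := hz
    have z0 : ∀ V : ℂ × ℂ × ℂ, massInner m₁ m₂ m₃ V (0 : ℂ × ℂ × ℂ) = 0 := by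
      intro V; simp [massInner]
    have k1 := massInner_comb m₁ m₂ m₃ Q Q N T z.1 z.2.1 z.2.2
    rw [hz', z0, hQQ, h1, h2] at k1
    have hz1 : z.1 = 0 := by
      rcases mul_eq_zero.1 (show z.1 * (massSq m₁ m₂ m₃ Q : ℂ) = 0 by linear_combination -k1)
        with h | h
      · exact h
      · exact absurd h pQ
    have k2 := massInner_comb m₁ m₂ m₃ N Q N T z.1 z.2.1 z.2.2
    rw [hz', z0, hNQ, hNN, h3] at k2
    have hz2 : z.2.1 = 0 := by
      rcases mul_eq_zero.1 (show z.2.1 * (massSq m₁ m₂ m₃ N : ℂ) = 0 by linear_combination -k2)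
        with h | h
      · exact h
      · exact absurd h pN
    have k3 := massInner_comb m₁ m₂ m₃ T Q N T z.1 z.2.1 z.2.2
    rw [hz', z0, hTQ, hTN, hTT] at k3
    have hz3 : z.2.2 = 0 := by
      rcases mul_eq_zero.1 (show z.2.2 * (massSq m₁ m₂ m₃ T : ℂ) = 0 by linear_combination -k3)
        with h | h
      · exact h
      · exact absurd h pT
    exact Prod.ext hz1 (Prod.ext hz2 hz3)
  have hsurj : Function.Surjective f := (LinearMap.injective_iff_surjective).1 hinj
  intro v
  obtain ⟨c, hcv⟩ := hsurj v
  refine ⟨c, hcv.symm, ?_⟩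
  intro c' hc'
  exact hinj (show f c' = f c from hc'.symm.trans hcv.symm)
end
end

section
/- Let X ∈ W with X ≠ 0, let Y ∈ ℂ³ satisfy Re⟨Y,X⟩ = 0 (evaluation pairing), let r > 0 and p_r ∈ ℝ, and set P = (p_r/|X|)·X* + (|X|/r)·Y, where X* = (1/m)(m₁m₂X₁₂, m₃m₁X₃₁, m₂m₃X₂₃) and |X| is the mass norm. Then the kinetic energy splits as K(P) = (1/2)p_r² + (|X|²/r²)·K(Y). -/
noncomputable section
open Complex ComplexConjugate

/-- The dual covector `X*` of `X` for the mass metric. -/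
def dualVec (m₁ m₂ m₃ : ℝ) (X : ℂ × ℂ × ℂ) : ℂ × ℂ × ℂ :=
  (((m₁ * m₂ / (m₁ + m₂ + m₃) : ℝ) : ℂ) * X.1,
   ((m₃ * m₁ / (m₁ + m₂ + m₃) : ℝ) : ℂ) * X.2.1,
   ((m₂ * m₃ / (m₁ + m₂ + m₃) : ℝ) : ℂ) * X.2.2)

/-- Polarization (cross term) of the kinetic energy form. -/
def crossKE (m₁ m₂ m₃ : ℝ) (U V : ℂ × ℂ × ℂ) : ℝ :=
  ((starRingEnd ℂ) (U.1 - U.2.1) * (V.1 - V.2.1)).re / m₁ +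
    ((starRingEnd ℂ) (U.2.2 - U.1) * (V.2.2 - V.1)).re / m₂ +
    ((starRingEnd ℂ) (U.2.1 - U.2.2) * (V.2.1 - V.2.2)).re / m₃

lemma KE_expand (m₁ m₂ m₃ a b : ℝ) (h₁ : m₁ ≠ 0) (h₂ : m₂ ≠ 0) (h₃ : m₃ ≠ 0)
    (U V : ℂ × ℂ × ℂ) :
    KE m₁ m₂ m₃ ((a : ℂ) • U + (b : ℂ) • V) =
      a ^ 2 * KE m₁ m₂ m₃ U + a * b * crossKE m₁ m₂ m₃ U V + b ^ 2 * KE m₁ m₂ m₃ V := by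
  obtain ⟨u1, u2, u3⟩ := U
  obtain ⟨v1, v2, v3⟩ := V
  simp only [KE, crossKE, Prod.smul_mk, Prod.mk_add_mk, smul_eq_mul, Complex.normSq_apply,
    Complex.add_re, Complex.add_im, Complex.sub_re, Complex.sub_im, Complex.mul_re,
    Complex.mul_im, Complex.ofReal_re, Complex.ofReal_im, Complex.conj_re, Complex.conj_im]
  field_simp
  ring

lemma KE_dualVec (m₁ m₂ m₃ : ℝ) (h₁ : m₁ ≠ 0) (h₂ : m₂ ≠ 0) (h₃ : m₃ ≠ 0)
    (hm : m₁ + m₂ + m₃ ≠ 0) (X : ℂ × ℂ × ℂ) (hW : X.1 + X.2.1 + X.2.2 = 0) :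
    KE m₁ m₂ m₃ (dualVec m₁ m₂ m₃ X) = massSq m₁ m₂ m₃ X / 2 := by
  obtain ⟨x1, x2, x3⟩ := X
  have hx3 : x3 = -x1 - x2 := by
    have := hW; simp only at this; linear_combination this
  subst hx3
  simp only [KE, massSq, dualVec, Complex.normSq_apply, Complex.add_re, Complex.add_im,
    Complex.sub_re, Complex.sub_im, Complex.neg_re, Complex.neg_im, Complex.mul_re,
    Complex.mul_im, Complex.ofReal_re, Complex.ofReal_im]
  field_simp
  ring

lemma crossKE_dualVec (m₁ m₂ m₃ : ℝ) (h₁ : m₁ ≠ 0) (h₂ : m₂ ≠ 0) (h₃ : m₃ ≠ 0)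
    (hm : m₁ + m₂ + m₃ ≠ 0) (X Y : ℂ × ℂ × ℂ) (hW : X.1 + X.2.1 + X.2.2 = 0) :
    crossKE m₁ m₂ m₃ (dualVec m₁ m₂ m₃ X) Y = (epair Y X).re := by
  obtain ⟨x1, x2, x3⟩ := X
  obtain ⟨y1, y2, y3⟩ := Y
  have hx3 : x3 = -x1 - x2 := by
    have := hW; simp only at this; linear_combination this
  subst hx3
  simp only [crossKE, epair, dualVec, Complex.add_re, Complex.add_im, Complex.sub_re,
    Complex.sub_im, Complex.neg_re, Complex.neg_im, Complex.mul_re, Complex.mul_im,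
    Complex.ofReal_re, Complex.ofReal_im, Complex.conj_re, Complex.conj_im]
  field_simp
  ring

/-- spherical splitting of the kinetic energy,
`K(P) = ½ p_r² + (|X|²/r²) K(Y)` for `P = (p_r/|X|) X* + (|X|/r) Y`. -/
theorem stmt5 (m₁ m₂ m₃ : ℝ) (hm₁ : 0 < m₁) (hm₂ : 0 < m₂) (hm₃ : 0 < m₃)
    (X Y : ℂ × ℂ × ℂ) (r p_r : ℝ)
    (hW : X.1 + X.2.1 + X.2.2 = 0) (hX : X ≠ 0) (hr : 0 < r)
    (hY : (epair Y X).re = 0) :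
    let nX : ℝ := Real.sqrt (massSq m₁ m₂ m₃ X)
    let P : ℂ × ℂ × ℂ := ((p_r / nX : ℝ) : ℂ) • dualVec m₁ m₂ m₃ X +
      ((nX / r : ℝ) : ℂ) • Y
    KE m₁ m₂ m₃ P = (1 / 2) * p_r ^ 2 + (massSq m₁ m₂ m₃ X / r ^ 2) * KE m₁ m₂ m₃ Y := by
  intro nX P
  have hm : (0:ℝ) < m₁ + m₂ + m₃ := by linarith
  have hs : 0 < massSq m₁ m₂ m₃ X := by
    have hX' : X.1 ≠ 0 ∨ X.2.1 ≠ 0 ∨ X.2.2 ≠ 0 := by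
      by_contra h
      push_neg at h
      exact hX (Prod.ext h.1 (Prod.ext h.2.1 h.2.2))
    have h1 : 0 ≤ m₁ * m₂ * Complex.normSq X.1 :=
      mul_nonneg (mul_nonneg hm₁.le hm₂.le) (Complex.normSq_nonneg _)
    have h2 : 0 ≤ m₃ * m₁ * Complex.normSq X.2.1 :=
      mul_nonneg (mul_nonneg hm₃.le hm₁.le) (Complex.normSq_nonneg _)
    have h3 : 0 ≤ m₂ * m₃ * Complex.normSq X.2.2 :=
      mul_nonneg (mul_nonneg hm₂.le hm₃.le) (Complex.normSq_nonneg _)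
    have : 0 < m₁ * m₂ * Complex.normSq X.1 + m₃ * m₁ * Complex.normSq X.2.1 +
        m₂ * m₃ * Complex.normSq X.2.2 := by
      rcases hX' with h | h | h
      · have := mul_pos (mul_pos hm₁ hm₂) (Complex.normSq_pos.mpr h)
        linarith
      · have := mul_pos (mul_pos hm₃ hm₁) (Complex.normSq_pos.mpr h)
        linarith
      · have := mul_pos (mul_pos hm₂ hm₃) (Complex.normSq_pos.mpr h)
        linarith
    exact div_pos this hm
  have hn2 : nX ^ 2 = massSq m₁ m₂ m₃ X := Real.sq_sqrt hs.le
  have hn0 : nX ≠ 0 := by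
    have : 0 < nX := Real.sqrt_pos.mpr hs
    exact this.ne'
  have hexp := KE_expand m₁ m₂ m₃ (p_r / nX) (nX / r) hm₁.ne' hm₂.ne' hm₃.ne'
    (dualVec m₁ m₂ m₃ X) Y
  rw [show P = ((p_r / nX : ℝ) : ℂ) • dualVec m₁ m₂ m₃ X + ((nX / r : ℝ) : ℂ) • Y from rfl,
    hexp, KE_dualVec m₁ m₂ m₃ hm₁.ne' hm₂.ne' hm₃.ne' hm.ne' X hW,
    crossKE_dualVec m₁ m₂ m₃ hm₁.ne' hm₂.ne' hm₃.ne' hm.ne' X Y hW, hY, mul_zero]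
  field_simp
  linear_combination (2 * nX ^ 2 * KE m₁ m₂ m₃ Y - p_r ^ 2 * r ^ 2) * hn2
end
end

section
/- Let X ∈ W with X ≠ 0, let Z ∈ ℂ³ satisfy ⟨Z,X⟩ = 0 (evaluation pairing), and let μ ∈ ℝ. Then, with Γ(X) = i·X*/|X|² where X* = (1/m)(m₁m₂X₁₂, m₃m₁X₃₁, m₂m₃X₂₃) and |X| the mass norm, the kinetic energy of the shifted momentum splits as K(Z + μ·Γ(X)) = K(Z) + μ²/(2|X|²). -/
noncomputable section
open Complex ComplexConjugate

private lemma expand_aux (m a a' t t' c c' : ℂ) (hm : m ≠ 0) :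
    (a' + c' * (m * t')) * (a + c * (m * t)) / (2 * m)
      = a' * a / (2 * m) + (c * (a' * t) + c' * (t' * a)) / 2 + c' * c * (m * (t' * t)) / 2 := by
  field_simp
  ring

private lemma comp_key (m₁ m₂ m₃ : ℂ) (h1 : m₁ ≠ 0) (h2 : m₂ ≠ 0) (h3 : m₃ ≠ 0)
    (hm : m₁ + m₂ + m₃ ≠ 0)
    (x1 x2 x1' x2' z1 z2 z3 z1' z2' z3' c c' : ℂ) :
    ((z1' + c' * (m₁ * m₂ / (m₁ + m₂ + m₃) * x1')) -
        (z2' + c' * (m₃ * m₁ / (m₁ + m₂ + m₃) * x2'))) *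
      ((z1 + c * (m₁ * m₂ / (m₁ + m₂ + m₃) * x1)) -
        (z2 + c * (m₃ * m₁ / (m₁ + m₂ + m₃) * x2))) / (2 * m₁)
    + ((z3' + c' * (m₂ * m₃ / (m₁ + m₂ + m₃) * (-x1' - x2'))) -
        (z1' + c' * (m₁ * m₂ / (m₁ + m₂ + m₃) * x1'))) *
      ((z3 + c * (m₂ * m₃ / (m₁ + m₂ + m₃) * (-x1 - x2))) -
        (z1 + c * (m₁ * m₂ / (m₁ + m₂ + m₃) * x1))) / (2 * m₂)
    + ((z2' + c' * (m₃ * m₁ / (m₁ + m₂ + m₃) * x2')) -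
        (z3' + c' * (m₂ * m₃ / (m₁ + m₂ + m₃) * (-x1' - x2')))) *
      ((z2 + c * (m₃ * m₁ / (m₁ + m₂ + m₃) * x2)) -
        (z3 + c * (m₂ * m₃ / (m₁ + m₂ + m₃) * (-x1 - x2)))) / (2 * m₃)
    = (z1' - z2') * (z1 - z2) / (2 * m₁) + (z3' - z1') * (z3 - z1) / (2 * m₂)
      + (z2' - z3') * (z2 - z3) / (2 * m₃)
      + c' * c * ((m₁ * m₂ * (x1' * x1) + m₃ * m₁ * (x2' * x2)
          + m₂ * m₃ * ((-x1' - x2') * (-x1 - x2))) / (m₁ + m₂ + m₃)) / 2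
      + (c * (z1' * x1 + z2' * x2 + z3' * (-x1 - x2))
          + c' * (x1' * z1 + x2' * z2 + (-x1' - x2') * z3)) / 2 := by
  set M := m₁ + m₂ + m₃ with hMdef
  set t1 := (m₂ * x1 - m₃ * x2) / M with ht1
  set t1' := (m₂ * x1' - m₃ * x2') / M with ht1'
  set t2 := (-(m₁ + m₃) * x1 - m₃ * x2) / M with ht2
  set t2' := (-(m₁ + m₃) * x1' - m₃ * x2') / M with ht2'
  set t3 := (m₂ * x1 + (m₁ + m₂) * x2) / M with ht3
  set t3' := (m₂ * x1' + (m₁ + m₂) * x2') / M with ht3'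
  have hE1 : ((z1' + c' * (m₁ * m₂ / M * x1')) - (z2' + c' * (m₃ * m₁ / M * x2'))) *
      ((z1 + c * (m₁ * m₂ / M * x1)) - (z2 + c * (m₃ * m₁ / M * x2))) / (2 * m₁)
      = ((z1' - z2') + c' * (m₁ * t1')) * ((z1 - z2) + c * (m₁ * t1)) / (2 * m₁) := by
    rw [ht1, ht1']; ring
  have hE2 : ((z3' + c' * (m₂ * m₃ / M * (-x1' - x2'))) - (z1' + c' * (m₁ * m₂ / M * x1'))) *
      ((z3 + c * (m₂ * m₃ / M * (-x1 - x2))) - (z1 + c * (m₁ * m₂ / M * x1))) / (2 * m₂)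
      = ((z3' - z1') + c' * (m₂ * t2')) * ((z3 - z1) + c * (m₂ * t2)) / (2 * m₂) := by
    rw [ht2, ht2']; ring
  have hE3 : ((z2' + c' * (m₃ * m₁ / M * x2')) - (z3' + c' * (m₂ * m₃ / M * (-x1' - x2')))) *
      ((z2 + c * (m₃ * m₁ / M * x2)) - (z3 + c * (m₂ * m₃ / M * (-x1 - x2)))) / (2 * m₃)
      = ((z2' - z3') + c' * (m₃ * t3')) * ((z2 - z3) + c * (m₃ * t3)) / (2 * m₃) := by
    rw [ht3, ht3']; ring
  rw [hE1, hE2, hE3, expand_aux m₁ (z1 - z2) (z1' - z2') t1 t1' c c' h1,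
    expand_aux m₂ (z3 - z1) (z3' - z1') t2 t2' c c' h2,
    expand_aux m₃ (z2 - z3) (z2' - z3') t3 t3' c c' h3]
  have hcross : (z1' - z2') * t1 + (z3' - z1') * t2 + (z2' - z3') * t3
      = z1' * x1 + z2' * x2 + z3' * (-x1 - x2) := by
    rw [ht1, ht2, ht3]; field_simp; ring
  have hcross' : t1' * (z1 - z2) + t2' * (z3 - z1) + t3' * (z2 - z3)
      = x1' * z1 + x2' * z2 + (-x1' - x2') * z3 := by
    rw [ht1', ht2', ht3']; field_simp; ring
  have hquad : m₁ * (t1' * t1) + m₂ * (t2' * t2) + m₃ * (t3' * t3)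
      = (m₁ * m₂ * (x1' * x1) + m₃ * m₁ * (x2' * x2)
          + m₂ * m₃ * ((-x1' - x2') * (-x1 - x2))) / M := by
    rw [ht1, ht1', ht2, ht2', ht3, ht3']; field_simp; ring
  linear_combination (c / 2) * hcross + (c' / 2) * hcross' + (c' * c / 2) * hquad

private lemma KE_cast (m₁ m₂ m₃ : ℝ) (P : ℂ × ℂ × ℂ) :
    ((KE m₁ m₂ m₃ P : ℝ) : ℂ) =
      conj (P.1 - P.2.1) * (P.1 - P.2.1) / (2 * (m₁ : ℂ))
      + conj (P.2.2 - P.1) * (P.2.2 - P.1) / (2 * (m₂ : ℂ))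
      + conj (P.2.1 - P.2.2) * (P.2.1 - P.2.2) / (2 * (m₃ : ℂ)) := by
  simp only [KE, Complex.ofReal_add, Complex.ofReal_div, Complex.ofReal_mul,
    Complex.ofReal_ofNat, Complex.normSq_eq_conj_mul_self]

private lemma mini (μ s : ℝ) (hs : s ≠ 0) :
    (-((μ : ℂ) * Complex.I / (s : ℂ))) * ((μ : ℂ) * Complex.I / (s : ℂ)) * ((s : ℝ) : ℂ) / 2
      = ((μ : ℂ)) ^ 2 / (2 * (s : ℂ)) := by
  have h : ((s : ℂ)) ≠ 0 := by exact_mod_cast hs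
  field_simp
  ring_nf
  rw [Complex.I_sq]
  ring

/-- the momentum-shift splitting of kinetic energy,
`K(Z + μ Γ(X)) = K(Z) + μ²/(2|X|²)` with `Γ(X) = i X*/|X|²`. -/
theorem stmt6 (m₁ m₂ m₃ : ℝ) (hm₁ : 0 < m₁) (hm₂ : 0 < m₂) (hm₃ : 0 < m₃)
    (X Z : ℂ × ℂ × ℂ) (μ : ℝ)
    (hW : X.1 + X.2.1 + X.2.2 = 0) (hX : X ≠ 0)
    (hZ : epair Z X = 0) :
    let Γ : ℂ × ℂ × ℂ := (Complex.I / ((massSq m₁ m₂ m₃ X : ℝ) : ℂ)) • dualVec m₁ m₂ m₃ X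
    KE m₁ m₂ m₃ (Z + (μ : ℂ) • Γ) = KE m₁ m₂ m₃ Z + μ ^ 2 / (2 * massSq m₁ m₂ m₃ X) := by
  intro Γ
  have hmsum : (0:ℝ) < m₁ + m₂ + m₃ := by linarith
  have hx3 : X.2.2 = -X.1 - X.2.1 := by linear_combination hW
  have hxne : X.1 ≠ 0 ∨ X.2.1 ≠ 0 ∨ X.2.2 ≠ 0 := by
    by_contra h
    push_neg at h
    exact hX (Prod.ext h.1 (Prod.ext h.2.1 h.2.2))
  have hS : 0 < massSq m₁ m₂ m₃ X := by
    rw [massSq]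
    apply div_pos _ hmsum
    have n1 := Complex.normSq_nonneg X.1
    have n2 := Complex.normSq_nonneg X.2.1
    have n3 := Complex.normSq_nonneg X.2.2
    rcases hxne with h | h | h
    · have hp := Complex.normSq_pos.mpr h
      nlinarith [mul_pos (mul_pos hm₁ hm₂) hp, mul_nonneg (mul_nonneg hm₃.le hm₁.le) n2,
        mul_nonneg (mul_nonneg hm₂.le hm₃.le) n3]
    · have hp := Complex.normSq_pos.mpr h
      nlinarith [mul_pos (mul_pos hm₃ hm₁) hp, mul_nonneg (mul_nonneg hm₁.le hm₂.le) n1,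
        mul_nonneg (mul_nonneg hm₂.le hm₃.le) n3]
    · have hp := Complex.normSq_pos.mpr h
      nlinarith [mul_pos (mul_pos hm₂ hm₃) hp, mul_nonneg (mul_nonneg hm₁.le hm₂.le) n1,
        mul_nonneg (mul_nonneg hm₃.le hm₁.le) n2]
  set S := massSq m₁ m₂ m₃ X with hSdef
  have hScast : ((S : ℝ) : ℂ) =
      ((m₁:ℂ) * (m₂:ℂ) * (conj X.1 * X.1) + (m₃:ℂ) * (m₁:ℂ) * (conj X.2.1 * X.2.1)
        + (m₂:ℂ) * (m₃:ℂ) * ((-conj X.1 - conj X.2.1) * (-X.1 - X.2.1)))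
        / ((m₁:ℂ) + (m₂:ℂ) + (m₃:ℂ)) := by
    rw [hSdef, massSq]
    push_cast
    simp only [Complex.normSq_eq_conj_mul_self, hx3, map_sub, map_neg]
  have hZ1 : conj Z.1 * X.1 + conj Z.2.1 * X.2.1 + conj Z.2.2 * (-X.1 - X.2.1) = 0 := by
    have h := hZ
    simp only [epair] at h
    rw [hx3] at h
    exact h
  have hZ2 : conj X.1 * Z.1 + conj X.2.1 * Z.2.1 + (-conj X.1 - conj X.2.1) * Z.2.2 = 0 := by
    have h := congrArg (starRingEnd ℂ) hZ1
    simp only [map_add, map_mul, map_sub, map_neg, map_zero, Complex.conj_conj] at h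
    linear_combination h
  have hm1 : ((m₁:ℂ)) ≠ 0 := by exact_mod_cast hm₁.ne'
  have hm2 : ((m₂:ℂ)) ≠ 0 := by exact_mod_cast hm₂.ne'
  have hm3 : ((m₃:ℂ)) ≠ 0 := by exact_mod_cast hm₃.ne'
  have hmm : ((m₁:ℂ) + (m₂:ℂ) + (m₃:ℂ)) ≠ 0 := by
    have h : ((m₁ + m₂ + m₃ : ℝ) : ℂ) ≠ 0 := by exact_mod_cast hmsum.ne'
    push_cast at h
    exact h
  have hcomp := comp_key (m₁:ℂ) (m₂:ℂ) (m₃:ℂ) hm1 hm2 hm3 hmm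
      X.1 X.2.1 (conj X.1) (conj X.2.1) Z.1 Z.2.1 Z.2.2 (conj Z.1) (conj Z.2.1) (conj Z.2.2)
      ((μ:ℂ) * Complex.I / ((S:ℝ):ℂ)) (-((μ:ℂ) * Complex.I / ((S:ℝ):ℂ)))
  have hq : (-((μ:ℂ) * Complex.I / ((S:ℝ):ℂ))) * ((μ:ℂ) * Complex.I / ((S:ℝ):ℂ)) *
      (((m₁:ℂ) * (m₂:ℂ) * (conj X.1 * X.1) + (m₃:ℂ) * (m₁:ℂ) * (conj X.2.1 * X.2.1)
        + (m₂:ℂ) * (m₃:ℂ) * ((-conj X.1 - conj X.2.1) * (-X.1 - X.2.1)))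
        / ((m₁:ℂ) + (m₂:ℂ) + (m₃:ℂ))) / 2 = ((μ:ℂ)) ^ 2 / (2 * ((S:ℝ):ℂ)) := by
    rw [← hScast]
    exact mini μ S hS.ne'
  -- explicit components of the shifted momentum
  have w1 : (Z + (μ : ℂ) • Γ).1
      = Z.1 + ((μ:ℂ) * Complex.I / ((S:ℝ):ℂ)) * ((m₁:ℂ) * (m₂:ℂ) / ((m₁:ℂ) + (m₂:ℂ) + (m₃:ℂ)) * X.1) := by
    show Z.1 + (μ : ℂ) * ((Complex.I / ((S:ℝ):ℂ)) * (((m₁ * m₂ / (m₁ + m₂ + m₃) : ℝ) : ℂ) * X.1)) = _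
    push_cast
    ring
  have w2 : (Z + (μ : ℂ) • Γ).2.1
      = Z.2.1 + ((μ:ℂ) * Complex.I / ((S:ℝ):ℂ)) * ((m₃:ℂ) * (m₁:ℂ) / ((m₁:ℂ) + (m₂:ℂ) + (m₃:ℂ)) * X.2.1) := by
    show Z.2.1 + (μ : ℂ) * ((Complex.I / ((S:ℝ):ℂ)) * (((m₃ * m₁ / (m₁ + m₂ + m₃) : ℝ) : ℂ) * X.2.1)) = _
    push_cast
    ring
  have w3 : (Z + (μ : ℂ) • Γ).2.2
      = Z.2.2 + ((μ:ℂ) * Complex.I / ((S:ℝ):ℂ)) * ((m₂:ℂ) * (m₃:ℂ) / ((m₁:ℂ) + (m₂:ℂ) + (m₃:ℂ)) * (-X.1 - X.2.1)) := by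
    show Z.2.2 + (μ : ℂ) * ((Complex.I / ((S:ℝ):ℂ)) * (((m₂ * m₃ / (m₁ + m₂ + m₃) : ℝ) : ℂ) * X.2.2)) = _
    rw [hx3]
    push_cast
    ring
  have final : ((KE m₁ m₂ m₃ (Z + (μ : ℂ) • Γ) : ℝ) : ℂ)
      = ((KE m₁ m₂ m₃ Z + μ ^ 2 / (2 * S) : ℝ) : ℂ) := by
    rw [Complex.ofReal_add, KE_cast, KE_cast, w1, w2, w3]
    push_cast
    simp only [map_sub, map_add, map_mul, map_div₀, map_neg, Complex.conj_ofReal,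
      Complex.conj_I, Complex.conj_conj]
    linear_combination hcomp + ((μ:ℂ) * Complex.I / ((S:ℝ):ℂ)) / 2 * hZ1
      + (-((μ:ℂ) * Complex.I / ((S:ℝ):ℂ))) / 2 * hZ2 + hq
  exact_mod_cast final
end
end

section
/- Let X ∈ W with X ≠ 0 and let Z ∈ ℂ³ satisfy ⟨Z,X⟩ = 0 (evaluation pairing). Then the Fubini–Study conorm of Z equals twice the shape kinetic energy scaled by |X|²: |⟨Z, e(X)⟩|² = 2·|X|²·K(Z), where e(X) = sqrt(m₁m₂m₃/m)·(conj(X₃₁)/m₂ − conj(X₂₃)/m₁, conj(X₂₃)/m₁ − conj(X₁₂)/m₃, conj(X₁₂)/m₃ − conj(X₃₁)/m₂) and |X| is the mass norm. -/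
noncomputable section
open Complex ComplexConjugate

/-- The Fubini–Study unit tangent vector field `e(X)`. -/
def eX (m₁ m₂ m₃ : ℝ) (X : ℂ × ℂ × ℂ) : ℂ × ℂ × ℂ :=
  ((Real.sqrt (m₁ * m₂ * m₃ / (m₁ + m₂ + m₃)) : ℝ) : ℂ) •
    (conj X.2.1 / (m₂ : ℂ) - conj X.2.2 / (m₁ : ℂ),
     conj X.2.2 / (m₁ : ℂ) - conj X.1 / (m₃ : ℂ),
     conj X.1 / (m₃ : ℂ) - conj X.2.1 / (m₂ : ℂ))

/-- the Fubini–Study conorm of `Z` equals twice the shape kinetic energy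
scaled by `|X|²`: `|⟨Z,e(X)⟩|² = 2|X|²K(Z)`. -/
theorem stmt8 (m₁ m₂ m₃ : ℝ) (hm₁ : 0 < m₁) (hm₂ : 0 < m₂) (hm₃ : 0 < m₃)
    (X Z : ℂ × ℂ × ℂ)
    (hW : X.1 + X.2.1 + X.2.2 = 0) (hX : X ≠ 0)
    (hZ : epair Z X = 0) :
    Complex.normSq (epair Z (eX m₁ m₂ m₃ X)) = 2 * massSq m₁ m₂ m₃ X * KE m₁ m₂ m₃ Z := by
  obtain ⟨a, b, c⟩ := X
  obtain ⟨u, v, w⟩ := Z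
  simp only [epair] at hZ
  simp only at hW
  have hm₁' : (m₁ : ℝ) ≠ 0 := hm₁.ne'
  have hm₂' : (m₂ : ℝ) ≠ 0 := hm₂.ne'
  have hm₃' : (m₃ : ℝ) ≠ 0 := hm₃.ne'
  have hm : (0:ℝ) < m₁ + m₂ + m₃ := by linarith
  have hm' : (m₁ + m₂ + m₃ : ℝ) ≠ 0 := hm.ne'
  -- orthogonality relations
  have r1 : (conj u - conj w) * a = (conj w - conj v) * b := by
    linear_combination hZ - conj w * hW
  have r2 : (conj v - conj u) * a = (conj w - conj v) * c := by
    linear_combination conj v * hW - hZ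
  have r3 : (conj v - conj u) * b = (conj u - conj w) * c := by
    linear_combination hZ - conj u * hW
  -- the cleared-denominator tangent covector
  set Wex : ℂ := (m₃:ℂ) * conj u * ((m₁:ℂ) * conj b - (m₂:ℂ) * conj c)
      + (m₂:ℂ) * conj v * ((m₃:ℂ) * conj c - (m₁:ℂ) * conj a)
      + (m₁:ℂ) * conj w * ((m₂:ℂ) * conj a - (m₃:ℂ) * conj b) with hWex
  -- key polynomial identity
  have hkey : Wex * conj Wex =
      ((m₁:ℂ) * m₂ * (a * conj a) + (m₃:ℂ) * m₁ * (b * conj b) + (m₂:ℂ) * m₃ * (c * conj c)) *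
      ((m₂:ℂ) * m₃ * ((u - v) * conj (u - v)) + (m₁:ℂ) * m₃ * ((w - u) * conj (w - u)) +
        (m₁:ℂ) * m₂ * ((v - w) * conj (v - w))) := by
    simp only [hWex, map_add, map_sub, map_mul, Complex.conj_conj, Complex.conj_ofReal]
    linear_combination
      ((m₁:ℂ)^2 * m₂ * m₃ * (conj b * (w - v) - conj a * (u - w))) * r1 +
      ((m₁:ℂ) * m₂^2 * m₃ * (conj c * (w - v) - conj a * (v - u))) * r2 +
      ((m₁:ℂ) * m₂ * m₃^2 * (conj c * (u - w) - conj b * (v - u))) * r3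
  -- real form of the key identity
  have hkeyR : Complex.normSq Wex =
      (m₁ * m₂ * Complex.normSq a + m₃ * m₁ * Complex.normSq b + m₂ * m₃ * Complex.normSq c) *
      (m₂ * m₃ * Complex.normSq (u - v) + m₁ * m₃ * Complex.normSq (w - u) +
        m₁ * m₂ * Complex.normSq (v - w)) := by
    have h := hkey
    simp only [Complex.mul_conj] at h
    exact_mod_cast h
  -- relate the pairing with Wex
  set s : ℝ := Real.sqrt (m₁ * m₂ * m₃ / (m₁ + m₂ + m₃)) with hs
  have hs2 : s * s = m₁ * m₂ * m₃ / (m₁ + m₂ + m₃) :=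
    Real.mul_self_sqrt (by positivity)
  have hpair : ((m₁:ℂ) * m₂ * m₃) * epair (u, v, w) (eX m₁ m₂ m₃ (a, b, c)) = (s:ℂ) * Wex := by
    simp only [epair, eX, Prod.smul_fst, Prod.smul_snd, smul_eq_mul, hWex, ← hs]
    have h1 : (m₁:ℂ) ≠ 0 := Complex.ofReal_ne_zero.mpr hm₁'
    have h2 : (m₂:ℂ) ≠ 0 := Complex.ofReal_ne_zero.mpr hm₂'
    have h3 : (m₃:ℂ) ≠ 0 := Complex.ofReal_ne_zero.mpr hm₃'
    field_simp
  -- take normSq of both sides of hpair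
  have hnorm : (m₁ * m₂ * m₃) * (m₁ * m₂ * m₃) * Complex.normSq (epair (u, v, w) (eX m₁ m₂ m₃ (a, b, c)))
      = (m₁ * m₂ * m₃ / (m₁ + m₂ + m₃)) * Complex.normSq Wex := by
    have h := congrArg Complex.normSq hpair
    simp only [Complex.normSq_mul, Complex.normSq_ofReal] at h
    rw [hs2] at h
    linear_combination h
  -- finish
  simp only [massSq, KE]
  have hden : (m₁ * m₂ * m₃) * (m₁ * m₂ * m₃) ≠ 0 := by positivity
  apply mul_left_cancel₀ hden
  rw [hnorm, hkeyR]
  field_simp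
end
end

section
/- Let X ∈ W with X ≠ 0 and let Z ∈ ℂ³ satisfy ⟨Z,X⟩ = 0 (evaluation pairing). Define the complex gradient vector BZ ∈ ℂ³ by (BZ)₁₂ = (Z₁₂−Z₃₁)/m₁ + (Z₁₂−Z₂₃)/m₂, (BZ)₃₁ = (Z₃₁−Z₁₂)/m₁ + (Z₃₁−Z₂₃)/m₃, (BZ)₂₃ = (Z₂₃−Z₁₂)/m₂ + (Z₂₃−Z₃₁)/m₃ (so that BZ is the gradient of K at Z in the paper's complex convention). Then |X|²·BZ = conj(⟨Z, e(X)⟩)·e(X), where e(X) = sqrt(m₁m₂m₃/m)·(conj(X₃₁)/m₂ − conj(X₂₃)/m₁, conj(X₂₃)/m₁ − conj(X₁₂)/m₃, conj(X₁₂)/m₃ − conj(X₃₁)/m₂) and |X| is the mass norm. In particular |X|²·BZ lies in W and is mass-orthogonal to X. -/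
noncomputable section
open Complex ComplexConjugate

/-- The complex gradient of `K` at `Z`, i.e. `BZ`. -/
def BZvec (m₁ m₂ m₃ : ℝ) (Z : ℂ × ℂ × ℂ) : ℂ × ℂ × ℂ :=
  ((Z.1 - Z.2.1) / (m₁ : ℂ) + (Z.1 - Z.2.2) / (m₂ : ℂ),
   (Z.2.1 - Z.1) / (m₁ : ℂ) + (Z.2.1 - Z.2.2) / (m₃ : ℂ),
   (Z.2.2 - Z.1) / (m₂ : ℂ) + (Z.2.2 - Z.2.1) / (m₃ : ℂ))

set_option maxHeartbeats 4000000 in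
/-- `|X|²·BZ = conj(⟨Z,e(X)⟩)·e(X)`, and in particular `|X|²·BZ ∈ W`
and is mass-orthogonal to `X`. -/
theorem stmt9 (m₁ m₂ m₃ : ℝ) (hm₁ : 0 < m₁) (hm₂ : 0 < m₂) (hm₃ : 0 < m₃)
    (X Z : ℂ × ℂ × ℂ)
    (hW : X.1 + X.2.1 + X.2.2 = 0) (hX : X ≠ 0)
    (hZ : epair Z X = 0) :
    ((massSq m₁ m₂ m₃ X : ℝ) : ℂ) • BZvec m₁ m₂ m₃ Z =
        conj (epair Z (eX m₁ m₂ m₃ X)) • eX m₁ m₂ m₃ X ∧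
    (((massSq m₁ m₂ m₃ X : ℝ) : ℂ) • BZvec m₁ m₂ m₃ Z).1 +
      (((massSq m₁ m₂ m₃ X : ℝ) : ℂ) • BZvec m₁ m₂ m₃ Z).2.1 +
      (((massSq m₁ m₂ m₃ X : ℝ) : ℂ) • BZvec m₁ m₂ m₃ Z).2.2 = 0 ∧
    massInner m₁ m₂ m₃ X (((massSq m₁ m₂ m₃ X : ℝ) : ℂ) • BZvec m₁ m₂ m₃ Z) = 0 := by
  have hm : (0:ℝ) < m₁ + m₂ + m₃ := by linarith
  have h1 : (m₁:ℂ) ≠ 0 := Complex.ofReal_ne_zero.2 hm₁.ne'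
  have h2 : (m₂:ℂ) ≠ 0 := Complex.ofReal_ne_zero.2 hm₂.ne'
  have h3 : (m₃:ℂ) ≠ 0 := Complex.ofReal_ne_zero.2 hm₃.ne'
  have hM : ((m₁ + m₂ + m₃ : ℝ):ℂ) ≠ 0 := Complex.ofReal_ne_zero.2 hm.ne'
  have hM' : (m₁:ℂ) + m₂ + m₃ ≠ 0 := by push_cast at hM; exact hM
  set s : ℝ := Real.sqrt (m₁ * m₂ * m₃ / (m₁ + m₂ + m₃)) with hs_def
  have hs : (s:ℂ) * (s:ℂ) * ((m₁:ℂ) + m₂ + m₃) = (m₁:ℂ) * m₂ * m₃ := by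
    have hss : s * s = m₁ * m₂ * m₃ / (m₁ + m₂ + m₃) :=
      Real.mul_self_sqrt (by positivity)
    rw [show ((s:ℂ)*(s:ℂ)) = ((s*s:ℝ):ℂ) by push_cast; ring, hss]
    push_cast
    field_simp
  have hWc : conj X.1 + conj X.2.1 + conj X.2.2 = 0 := by
    have := congrArg conj hW; simpa using this
  have hZc : Z.1 * conj X.1 + Z.2.1 * conj X.2.1 + Z.2.2 * conj X.2.2 = 0 := by
    have := congrArg conj hZ
    simp only [epair, map_add, map_mul, Complex.conj_conj, map_zero] at this
    exact this
  have comp1 : ((massSq m₁ m₂ m₃ X : ℝ) : ℂ) * (BZvec m₁ m₂ m₃ Z).1 =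
      conj (epair Z (eX m₁ m₂ m₃ X)) * (eX m₁ m₂ m₃ X).1 := by
    simp only [eX, epair, massSq, BZvec, Prod.smul_fst, Prod.smul_snd, smul_eq_mul,
      map_add, map_mul, map_sub, map_div₀, Complex.conj_conj, Complex.conj_ofReal]
    rw [← hs_def]
    push_cast [Complex.normSq_eq_conj_mul_self]
    field_simp
    have hX22 : X.2.2 = -X.1 - X.2.1 := by linear_combination hW
    have hc22 : conj X.2.2 = -conj X.1 - conj X.2.1 := by linear_combination hWc
    rw [hc22, hX22]
    linear_combination ((-1*(m₁:ℂ)^2*(m₃:ℂ)*X.2.1*(conj X.2.1)*Z.1) + (-1*(m₁:ℂ)*(m₂:ℂ)*(m₃:ℂ)*X.2.1*(conj X.1)*Z.1) + (-2*(m₁:ℂ)*(m₂:ℂ)*(m₃:ℂ)*X.2.1*(conj X.2.1)*Z.1) + (-1*(m₁:ℂ)*(m₂:ℂ)*(m₃:ℂ)*X.1*(conj X.2.1)*Z.1) + (-1*(m₂:ℂ)^2*(m₃:ℂ)*X.1*(conj X.1)*Z.1) + (-1*(m₂:ℂ)^2*(m₃:ℂ)*X.1*(conj X.2.1)*Z.1)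 + (-1*(m₂:ℂ)^2*(m₃:ℂ)*X.2.1*(conj X.1)*Z.1) + (-1*(m₂:ℂ)^2*(m₃:ℂ)*X.2.1*(conj X.2.1)*Z.1) + ((m₁:ℂ)*(m₂:ℂ)*(m₃:ℂ)*X.1*(conj X.2.1)*Z.2.1) + ((m₂:ℂ)^2*(m₃:ℂ)*X.1*(conj X.1)*Z.2.1) + ((m₂:ℂ)^2*(m₃:ℂ)*X.1*(conj X.2.1)*Z.2.1) + ((m₁:ℂ)*(m₂:ℂ)*(m₃:ℂ)*X.2.1*(conj X.2.1)*Z.2.1) + ((m₂:ℂ)^2*(m₃:ℂ)*X.2.1*(conj X.1)*Z.2.1) + ((m₂:ℂ)^2*(m₃:ℂ)*X.2.1*(conj X.2.1)*Z.2.1) + ((m₁:ℂ)^2*(m₂:ℂ)*X.1*(conj X.2.1)*Z.2.1) + ((m₁:ℂ)*(m₂:ℂ)^2*X.1*(conj X.1)*Z.2.1) + ((m₁:ℂ)*(m₂:ℂ)^2*X.1*(conj X.2.1)*Z.2.1) + (-1*(m₁:ℂ)^2*(m₂:ℂ)*X.1*(conj X.2.1)*Z.2.2) + (-1*(m₁:ℂ)*(m₂:ℂ)^2*X.1*(conj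 X.1)*Z.2.2) + (-1*(m₁:ℂ)*(m₂:ℂ)^2*X.1*(conj X.2.1)*Z.2.2) + ((m₁:ℂ)^2*(m₃:ℂ)*X.2.1*(conj X.2.1)*Z.2.2) + ((m₁:ℂ)*(m₂:ℂ)*(m₃:ℂ)*X.2.1*(conj X.1)*Z.2.2) + ((m₁:ℂ)*(m₂:ℂ)*(m₃:ℂ)*X.2.1*(conj X.2.1)*Z.2.2)) * hs + (((m₁:ℂ)^2*(m₂:ℂ)^3*(m₃:ℂ)*X.1) + ((m₁:ℂ)^3*(m₂:ℂ)^2*(m₃:ℂ)*X.1) + ((m₁:ℂ)^2*(m₂:ℂ)^2*(m₃:ℂ)^2*X.1)) * hZc + ((-1*(m₁:ℂ)^2*(m₂:ℂ)^3*(m₃:ℂ)*X.1*Z.2.2) + (-1*(m₁:ℂ)^3*(m₂:ℂ)^2*(m₃:ℂ)*X.1*Z.2.2) + (-1*(m₁:ℂ)^2*(m₂:ℂ)^2*(m₃:ℂ)^2*X.1*Z.2.2)) * hWc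
  have comp2 : ((massSq m₁ m₂ m₃ X : ℝ) : ℂ) * (BZvec m₁ m₂ m₃ Z).2.1 =
      conj (epair Z (eX m₁ m₂ m₃ X)) * (eX m₁ m₂ m₃ X).2.1 := by
    simp only [eX, epair, massSq, BZvec, Prod.smul_fst, Prod.smul_snd, smul_eq_mul,
      map_add, map_mul, map_sub, map_div₀, Complex.conj_conj, Complex.conj_ofReal]
    rw [← hs_def]
    push_cast [Complex.normSq_eq_conj_mul_self]
    field_simp
    have hX22 : X.2.2 = -X.1 - X.2.1 := by linear_combination hW
    have hc22 : conj X.2.2 = -conj X.1 - conj X.2.1 := by linear_combination hWc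
    rw [hc22, hX22]
    linear_combination (((m₁:ℂ)*(m₃:ℂ)^2*X.2.1*(conj X.1)*Z.1) + ((m₁:ℂ)*(m₃:ℂ)^2*X.2.1*(conj X.2.1)*Z.1) + ((m₁:ℂ)^2*(m₃:ℂ)*X.2.1*(conj X.1)*Z.1) + ((m₂:ℂ)*(m₃:ℂ)^2*X.1*(conj X.1)*Z.1) + ((m₂:ℂ)*(m₃:ℂ)^2*X.1*(conj X.2.1)*Z.1) + ((m₁:ℂ)*(m₂:ℂ)*(m₃:ℂ)*X.1*(conj X.1)*Z.1) + ((m₂:ℂ)*(m₃:ℂ)^2*X.2.1*(conj X.1)*Z.1) + ((m₂:ℂ)*(m₃:ℂ)^2*X.2.1*(conj X.2.1)*Z.1) + ((m₁:ℂ)*(m₂:ℂ)*(m₃:ℂ)*X.2.1*(conj X.1)*Z.1) + (-1*(m₂:ℂ)*(m₃:ℂ)^2*X.1*(conj X.1)*Z.2.1) + (-1*(m₂:ℂ)*(m₃:ℂ)^2*X.1*(conj X.2.1)*Z.2.1) + (-2*(m₁:ℂ)*(m₂:ℂ)*(m₃:ℂ)*X.1*(conj X.1)*Z.2.1) + (-1*(m₂:ℂ)*(m₃:ℂ)^2*X.2.1*(conj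 X.1)*Z.2.1) + (-1*(m₂:ℂ)*(m₃:ℂ)^2*X.2.1*(conj X.2.1)*Z.2.1) + (-1*(m₁:ℂ)*(m₂:ℂ)*(m₃:ℂ)*X.2.1*(conj X.1)*Z.2.1) + (-1*(m₁:ℂ)*(m₂:ℂ)*(m₃:ℂ)*X.1*(conj X.2.1)*Z.2.1) + (-1*(m₁:ℂ)^2*(m₂:ℂ)*X.1*(conj X.1)*Z.2.1) + ((m₁:ℂ)*(m₂:ℂ)*(m₃:ℂ)*X.1*(conj X.1)*Z.2.2) + ((m₁:ℂ)*(m₂:ℂ)*(m₃:ℂ)*X.1*(conj X.2.1)*Z.2.2) + ((m₁:ℂ)^2*(m₂:ℂ)*X.1*(conj X.1)*Z.2.2) + (-1*(m₁:ℂ)*(m₃:ℂ)^2*X.2.1*(conj X.1)*Z.2.2) + (-1*(m₁:ℂ)*(m₃:ℂ)^2*X.2.1*(conj X.2.1)*Z.2.2) + (-1*(m₁:ℂ)^2*(m₃:ℂ)*X.2.1*(conj X.1)*Z.2.2)) * hs + (((m₁:ℂ)^2*(m₂:ℂ)*(m₃:ℂ)^3*X.2.1) + ((m₁:ℂ)^3*(m₂:ℂ)*(m₃:ℂ)^2*X.2.1)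 + ((m₁:ℂ)^2*(m₂:ℂ)^2*(m₃:ℂ)^2*X.2.1)) * hZc + ((-1*(m₁:ℂ)^2*(m₂:ℂ)*(m₃:ℂ)^3*X.2.1*Z.2.2) + (-1*(m₁:ℂ)^3*(m₂:ℂ)*(m₃:ℂ)^2*X.2.1*Z.2.2) + (-1*(m₁:ℂ)^2*(m₂:ℂ)^2*(m₃:ℂ)^2*X.2.1*Z.2.2)) * hWc
  have comp3 : ((massSq m₁ m₂ m₃ X : ℝ) : ℂ) * (BZvec m₁ m₂ m₃ Z).2.2 =
      conj (epair Z (eX m₁ m₂ m₃ X)) * (eX m₁ m₂ m₃ X).2.2 := by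
    simp only [eX, epair, massSq, BZvec, Prod.smul_fst, Prod.smul_snd, smul_eq_mul,
      map_add, map_mul, map_sub, map_div₀, Complex.conj_conj, Complex.conj_ofReal]
    rw [← hs_def]
    push_cast [Complex.normSq_eq_conj_mul_self]
    field_simp
    have hX22 : X.2.2 = -X.1 - X.2.1 := by linear_combination hW
    have hc22 : conj X.2.2 = -conj X.1 - conj X.2.1 := by linear_combination hWc
    rw [hc22, hX22]
    linear_combination ((-1*(m₁:ℂ)*(m₂:ℂ)*(m₃:ℂ)*X.2.1*(conj X.1)*Z.1) + ((m₁:ℂ)*(m₃:ℂ)^2*X.2.1*(conj X.2.1)*Z.1) + (-1*(m₂:ℂ)^2*(m₃:ℂ)*X.1*(conj X.1)*Z.1) + ((m₂:ℂ)*(m₃:ℂ)^2*X.1*(conj X.2.1)*Z.1) + (-1*(m₂:ℂ)^2*(m₃:ℂ)*X.2.1*(conj X.1)*Z.1) + ((m₂:ℂ)*(m₃:ℂ)^2*X.2.1*(conj X.2.1)*Z.1) + ((m₂:ℂ)^2*(m₃:ℂ)*X.1*(conj X.1)*Z.2.1) + (-1*(m₂:ℂ)*(m₃:ℂ)^2*X.1*(conj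 X.2.1)*Z.2.1) + ((m₂:ℂ)^2*(m₃:ℂ)*X.2.1*(conj X.1)*Z.2.1) + (-1*(m₂:ℂ)*(m₃:ℂ)^2*X.2.1*(conj X.2.1)*Z.2.1) + ((m₁:ℂ)*(m₂:ℂ)^2*X.1*(conj X.1)*Z.2.1) + (-1*(m₁:ℂ)*(m₂:ℂ)*(m₃:ℂ)*X.1*(conj X.2.1)*Z.2.1) + (-1*(m₁:ℂ)*(m₂:ℂ)^2*X.1*(conj X.1)*Z.2.2) + ((m₁:ℂ)*(m₂:ℂ)*(m₃:ℂ)*X.1*(conj X.2.1)*Z.2.2) + ((m₁:ℂ)*(m₂:ℂ)*(m₃:ℂ)*X.2.1*(conj X.1)*Z.2.2) + (-1*(m₁:ℂ)*(m₃:ℂ)^2*X.2.1*(conj X.2.1)*Z.2.2)) * hs + ((-1*(m₁:ℂ)^2*(m₂:ℂ)^2*(m₃:ℂ)^2*X.1) + (-1*(m₁:ℂ)*(m₂:ℂ)^2*(m₃:ℂ)^3*X.1) + (-1*(m₁:ℂ)*(m₂:ℂ)^2*(m₃:ℂ)^3*X.2.1) + (-1*(m₁:ℂ)^2*(m₂:ℂ)^2*(m₃:ℂ)^2*X.2.1)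 + (-1*(m₁:ℂ)*(m₂:ℂ)^3*(m₃:ℂ)^2*X.1) + (-1*(m₁:ℂ)*(m₂:ℂ)^3*(m₃:ℂ)^2*X.2.1)) * hZc + (((m₁:ℂ)^2*(m₂:ℂ)^2*(m₃:ℂ)^2*X.1*Z.2.2) + ((m₁:ℂ)*(m₂:ℂ)^2*(m₃:ℂ)^3*X.1*Z.2.2) + ((m₁:ℂ)*(m₂:ℂ)^2*(m₃:ℂ)^3*X.2.1*Z.2.2) + ((m₁:ℂ)^2*(m₂:ℂ)^2*(m₃:ℂ)^2*X.2.1*Z.2.2) + ((m₁:ℂ)*(m₂:ℂ)^3*(m₃:ℂ)^2*X.1*Z.2.2) + ((m₁:ℂ)*(m₂:ℂ)^3*(m₃:ℂ)^2*X.2.1*Z.2.2)) * hWc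
  have hmain : ((massSq m₁ m₂ m₃ X : ℝ) : ℂ) • BZvec m₁ m₂ m₃ Z =
      conj (epair Z (eX m₁ m₂ m₃ X)) • eX m₁ m₂ m₃ X := by
    have e1 : (((massSq m₁ m₂ m₃ X : ℝ) : ℂ) • BZvec m₁ m₂ m₃ Z).1 =
        (conj (epair Z (eX m₁ m₂ m₃ X)) • eX m₁ m₂ m₃ X).1 := by
      simpa [Prod.smul_fst, smul_eq_mul] using comp1
    have e2 : (((massSq m₁ m₂ m₃ X : ℝ) : ℂ) • BZvec m₁ m₂ m₃ Z).2.1 =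
        (conj (epair Z (eX m₁ m₂ m₃ X)) • eX m₁ m₂ m₃ X).2.1 := by
      simpa [Prod.smul_snd, Prod.smul_fst, smul_eq_mul] using comp2
    have e3 : (((massSq m₁ m₂ m₃ X : ℝ) : ℂ) • BZvec m₁ m₂ m₃ Z).2.2 =
        (conj (epair Z (eX m₁ m₂ m₃ X)) • eX m₁ m₂ m₃ X).2.2 := by
      simpa [Prod.smul_snd, smul_eq_mul] using comp3
    exact Prod.ext e1 (Prod.ext e2 e3)
  refine ⟨hmain, ?_, ?_⟩
  · simp only [BZvec, Prod.smul_fst, Prod.smul_snd, smul_eq_mul]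
    ring
  · have hv : ((m₁*m₂:ℝ):ℂ) * conj X.1 * (conj X.2.1/(m₂:ℂ) - conj X.2.2/(m₁:ℂ)) +
        ((m₃*m₁:ℝ):ℂ) * conj X.2.1 * (conj X.2.2/(m₁:ℂ) - conj X.1/(m₃:ℂ)) +
        ((m₂*m₃:ℝ):ℂ) * conj X.2.2 * (conj X.1/(m₃:ℂ) - conj X.2.1/(m₂:ℂ)) = 0 := by
      push_cast
      field_simp
      ring
    rw [hmain]
    set w : ℂ := conj (epair Z (eX m₁ m₂ m₃ X)) with hw
    simp only [massInner, eX, Prod.smul_fst, Prod.smul_snd, smul_eq_mul]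
    rw [← add_div, ← add_div, div_eq_zero_iff]
    left
    linear_combination (w * ((s:ℝ):ℂ)) * hv
end
end

section
/- Let X ∈ W and V ∈ W. Then ⟨e(X), V⟩ₘ = sqrt(m₁m₂m₃/m)·(X₃₁V₁₂ − X₁₂V₃₁), where e(X) = sqrt(m₁m₂m₃/m)·(conj(X₃₁)/m₂ − conj(X₂₃)/m₁, conj(X₂₃)/m₁ − conj(X₁₂)/m₃, conj(X₁₂)/m₃ − conj(X₃₁)/m₂); moreover the three expressions X₃₁V₁₂ − X₁₂V₃₁, X₁₂V₂₃ − X₂₃V₁₂ and X₂₃V₃₁ − X₃₁V₂₃ are all equal. In particular the one-form σ = ⟨e(X), dX⟩ (up to the constant factor sqrt(m₁m₂m₃/m)) is independent of the masses. -/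
noncomputable section
open Complex ComplexConjugate

/-- `⟨e(X),V⟩ₘ = sqrt(m₁m₂m₃/m)(X₃₁V₁₂ − X₁₂V₃₁)` for `X, V ∈ W`, and the
three expressions `X₃₁V₁₂ − X₁₂V₃₁`, `X₁₂V₂₃ − X₂₃V₁₂`, `X₂₃V₃₁ − X₃₁V₂₃` all agree,
so the one-form `σ` is independent of the masses. -/
theorem stmt10 (m₁ m₂ m₃ : ℝ) (hm₁ : 0 < m₁) (hm₂ : 0 < m₂) (hm₃ : 0 < m₃)
    (X V : ℂ × ℂ × ℂ)
    (hXW : X.1 + X.2.1 + X.2.2 = 0) (hVW : V.1 + V.2.1 + V.2.2 = 0) :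
    massInner m₁ m₂ m₃ (eX m₁ m₂ m₃ X) V =
      ((Real.sqrt (m₁ * m₂ * m₃ / (m₁ + m₂ + m₃)) : ℝ) : ℂ) * (X.2.1 * V.1 - X.1 * V.2.1) ∧
    X.2.1 * V.1 - X.1 * V.2.1 = X.1 * V.2.2 - X.2.2 * V.1 ∧
    X.1 * V.2.2 - X.2.2 * V.1 = X.2.2 * V.2.1 - X.2.1 * V.2.2 := by
  obtain ⟨x₁, x₂, x₃⟩ := X
  obtain ⟨v₁, v₂, v₃⟩ := V
  simp only [Prod.fst, Prod.snd] at *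
  have hx3 : x₃ = -(x₁ + x₂) := by linear_combination hXW
  have hv3 : v₃ = -(v₁ + v₂) := by linear_combination hVW
  subst hx3 hv3
  have hm1 : (m₁ : ℂ) ≠ 0 := by exact_mod_cast hm₁.ne'
  have hm2 : (m₂ : ℂ) ≠ 0 := by exact_mod_cast hm₂.ne'
  have hm3 : (m₃ : ℂ) ≠ 0 := by exact_mod_cast hm₃.ne'
  have hms : ((m₁ + m₂ + m₃ : ℝ) : ℂ) ≠ 0 := by
    exact_mod_cast (by positivity : (0:ℝ) < m₁ + m₂ + m₃).ne'
  refine ⟨?_, by ring, by ring⟩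
  set c : ℂ := ((Real.sqrt (m₁ * m₂ * m₃ / (m₁ + m₂ + m₃)) : ℝ) : ℂ) with hc
  have hcc : conj c = c := by rw [hc, Complex.conj_ofReal]
  simp only [massInner, eX, Prod.smul_mk, smul_eq_mul, ← hc, map_mul, map_sub, map_div₀,
    Complex.conj_conj, Complex.conj_ofReal, hcc]
  rw [← add_div, ← add_div, div_eq_iff hms]
  field_simp
  push_cast
  ring
end
end

section
/- Let z ∈ C with z ≠ 0, write z = a + i·b with a, b ∈ ℝ³ the componentwise real and imaginary parts, and set c = a × b with components c = (c₁, c₂, c₃) indexed by the pairs (12), (31), (23). Then: (i) |c| = |a|² > 0; (ii) the squared mutual distances satisfy |z₁₂|² = (c₂² + c₃²)/|c|, |z₃₁|² = (c₁² + c₃²)/|c|, |z₂₃|² = (c₁² + c₂²)/|c|; (iii) conj(z₁₂)·z₃₁ = −c₁c₂/|c| + i·c₃, conj(z₂₃)·z₁₂ = −c₃c₁/|c| + i·c₂, conj(z₃₁)·z₂₃ = −c₂c₃/|c| + i·c₁; and (iv) z × conj(z) = −2i·c, where × denotes the complex-bilinear extension of the cross product to ℂ³. -/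
set_option maxHeartbeats 1000000


noncomputable section
open Complex ComplexConjugate

/-- Euclidean dot product on ℝ³ (as a triple). -/
def dot3 (a b : ℝ × ℝ × ℝ) : ℝ :=
  a.1 * b.1 + a.2.1 * b.2.1 + a.2.2 * b.2.2

/-- Cross product on ℝ³ (as a triple). -/
def cross3 (a b : ℝ × ℝ × ℝ) : ℝ × ℝ × ℝ :=
  (a.2.1 * b.2.2 - a.2.2 * b.2.1, a.2.2 * b.1 - a.1 * b.2.2, a.1 * b.2.1 - a.2.1 * b.1)

/-- Complex-bilinear extension of the cross product to ℂ³ (as a triple). -/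
def ccross (a b : ℂ × ℂ × ℂ) : ℂ × ℂ × ℂ :=
  (a.2.1 * b.2.2 - a.2.2 * b.2.1, a.2.2 * b.1 - a.1 * b.2.2, a.1 * b.2.1 - a.2.1 * b.1)

/-- for `z ∈ C ∖ {0}`, with `a = Re z`, `b = Im z`, `c = a × b`:
(i) `|c| = |a|² > 0`; (ii) the formulas for the squared mutual distances `|z_{ij}|²`
in terms of `c`; (iii) the formulas for `conj(z_{ij})z_{kl}`; (iv) `z × conj z = −2ic`. -/
theorem stmt14 (z : ℂ × ℂ × ℂ) (hz : z ≠ 0)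
    (hC : z.1 ^ 2 + z.2.1 ^ 2 + z.2.2 ^ 2 = 0) :
    let a : ℝ × ℝ × ℝ := (z.1.re, z.2.1.re, z.2.2.re)
    let b : ℝ × ℝ × ℝ := (z.1.im, z.2.1.im, z.2.2.im)
    let c : ℝ × ℝ × ℝ := cross3 a b
    let nc : ℝ := Real.sqrt (dot3 c c)
    -- (i)
    (nc = dot3 a a ∧ 0 < dot3 a a) ∧
    -- (ii)
    (Complex.normSq z.1 = (c.2.1 ^ 2 + c.2.2 ^ 2) / nc ∧
     Complex.normSq z.2.1 = (c.1 ^ 2 + c.2.2 ^ 2) / nc ∧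
     Complex.normSq z.2.2 = (c.1 ^ 2 + c.2.1 ^ 2) / nc) ∧
    -- (iii)
    (conj z.1 * z.2.1 = ((-(c.1 * c.2.1) / nc : ℝ) : ℂ) + Complex.I * (c.2.2 : ℂ) ∧
     conj z.2.2 * z.1 = ((-(c.2.2 * c.1) / nc : ℝ) : ℂ) + Complex.I * (c.2.1 : ℂ) ∧
     conj z.2.1 * z.2.2 = ((-(c.2.1 * c.2.2) / nc : ℝ) : ℂ) + Complex.I * (c.1 : ℂ)) ∧
    -- (iv)
    ccross z (conj z.1, conj z.2.1, conj z.2.2) =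
      (-2 * Complex.I * (c.1 : ℂ), -2 * Complex.I * (c.2.1 : ℂ),
        -2 * Complex.I * (c.2.2 : ℂ)) := by
  obtain ⟨z1, z2, z3⟩ := z
  simp only at hC ⊢
  simp only [dot3, cross3, Complex.normSq_apply]
  set a1 := z1.re with ha1d
  set a2 := z2.re with ha2d
  set a3 := z3.re with ha3d
  set b1 := z1.im with hb1d
  set b2 := z2.im with hb2d
  set b3 := z3.im with hb3d
  have h1 : a1^2 + a2^2 + a3^2 = b1^2 + b2^2 + b3^2 := by
    have := congrArg Complex.re hC
    simp [pow_two, Complex.mul_re] at this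
    ring_nf at this ⊢
    linarith
  have h2 : a1*b1 + a2*b2 + a3*b3 = 0 := by
    have := congrArg Complex.im hC
    simp [pow_two, Complex.mul_im] at this
    ring_nf at this ⊢
    linarith
  have hSa : 0 < a1 * a1 + a2 * a2 + a3 * a3 := by
    rcases lt_or_ge 0 (a1 * a1 + a2 * a2 + a3 * a3) with h | h
    · exact h
    · exfalso
      have h0 : a1 * a1 + a2 * a2 + a3 * a3 = 0 := le_antisymm h (by nlinarith [mul_self_nonneg a1, mul_self_nonneg a2, mul_self_nonneg a3])
      apply hz
      simp only [Prod.ext_iff, Complex.ext_iff, Prod.fst_zero, Prod.snd_zero,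
        Complex.zero_re, Complex.zero_im]
      have hb0 : b1 * b1 + b2 * b2 + b3 * b3 = 0 := by nlinarith
      refine ⟨⟨?_, ?_⟩, ⟨?_, ?_⟩, ⟨?_, ?_⟩⟩ <;>
        apply mul_self_eq_zero.mp <;>
        linarith [mul_self_nonneg a1, mul_self_nonneg a2, mul_self_nonneg a3,
          mul_self_nonneg b1, mul_self_nonneg b2, mul_self_nonneg b3]
  have hS0 : a1 * a1 + a2 * a2 + a3 * a3 ≠ 0 := ne_of_gt hSa
  have hnc : Real.sqrt ((a2 * b3 - a3 * b2) * (a2 * b3 - a3 * b2) +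
      (a3 * b1 - a1 * b3) * (a3 * b1 - a1 * b3) +
      (a1 * b2 - a2 * b1) * (a1 * b2 - a2 * b1)) = a1 * a1 + a2 * a2 + a3 * a3 := by
    rw [show (a2 * b3 - a3 * b2) * (a2 * b3 - a3 * b2) +
      (a3 * b1 - a1 * b3) * (a3 * b1 - a1 * b3) +
      (a1 * b2 - a2 * b1) * (a1 * b2 - a2 * b1) = (a1 * a1 + a2 * a2 + a3 * a3)^2 by
        linear_combination (-(a1^2 + a2^2 + a3^2)) * h1 + (-(a1*b1+a2*b2+a3*b3)) * h2]
    exact Real.sqrt_sq hSa.le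
  rw [hnc]
  refine ⟨⟨rfl, hSa⟩, ⟨?_, ?_, ?_⟩, ⟨?_, ?_, ?_⟩, ?_⟩
  · rw [eq_div_iff hS0]
    linear_combination (a1^2) * h1 + (2*a1*b1) * h2
  · rw [eq_div_iff hS0]
    linear_combination (a2^2) * h1 + (2*a2*b2) * h2
  · rw [eq_div_iff hS0]
    linear_combination (a3^2) * h1 + (2*a3*b3) * h2
  · rw [show -((a2 * b3 - a3 * b2) * (a3 * b1 - a1 * b3)) / (a1 * a1 + a2 * a2 + a3 * a3)
        = a1 * a2 + b1 * b2 by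
      rw [div_eq_iff hS0]
      linear_combination (-(a1*a2)) * h1 + (-(a1*b2+a2*b1)) * h2]
    apply Complex.ext <;> simp [Complex.mul_re, Complex.mul_im] <;> ring
  · rw [show -((a1 * b2 - a2 * b1) * (a2 * b3 - a3 * b2)) / (a1 * a1 + a2 * a2 + a3 * a3)
        = a3 * a1 + b3 * b1 by
      rw [div_eq_iff hS0]
      linear_combination (-(a3*a1)) * h1 + (-(a3*b1+a1*b3)) * h2]
    apply Complex.ext <;> simp [Complex.mul_re, Complex.mul_im] <;> ring
  · rw [show -((a3 * b1 - a1 * b3) * (a1 * b2 - a2 * b1)) / (a1 * a1 + a2 * a2 + a3 * a3)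
        = a2 * a3 + b2 * b3 by
      rw [div_eq_iff hS0]
      linear_combination (-(a2*a3)) * h1 + (-(a2*b3+a3*b2)) * h2]
    apply Complex.ext <;> simp [Complex.mul_re, Complex.mul_im] <;> ring
  · refine Prod.ext ?_ (Prod.ext ?_ ?_) <;> simp only [ccross] <;>
      apply Complex.ext <;>
      simp [Complex.mul_re, Complex.mul_im, Complex.sub_re, Complex.sub_im] <;> ring
end
end

section
/- Let z ∈ ℂ³ with z₁₂, z₃₁, z₂₃ all nonzero, let η ∈ ℂ³, and define the Levi-Civita transformed momentum Y = (η₁₂/(2·conj(z₁₂)), η₃₁/(2·conj(z₃₁)), η₂₃/(2·conj(z₂₃))). Set ρ₁₂ = |z₁₂|², ρ₃₁ = |z₃₁|², ρ₂₃ = |z₂₃|², and π₁ = η₁₂·conj(z₃₁) − η₃₁·conj(z₁₂), π₂ = η₂₃·conj(z₁₂) − η₁₂·conj(z₂₃), π₃ = η₃₁·conj(z₂₃) − η₂₃·conj(z₃₁). Then the kinetic energy transforms as K(Y) = |π₁|²/(8m₁ρ₁₂ρ₃₁) + |π₂|²/(8m₂ρ₁₂ρ₂₃) + |π₃|²/(8m₃ρ₃₁ρ₂₃).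 -/
noncomputable section
open Complex ComplexConjugate

lemma lc_diff (a b u v : ℂ) (hu : u ≠ 0) (hv : v ≠ 0) :
    a / (2 * u) - b / (2 * v) = (a * v - b * u) / (2 * u * v) := by
  field_simp

/-- the kinetic energy after the three simultaneous Levi-Civita
transformations `Y_{ij} = η_{ij}/(2 conj(z_{ij}))`. -/
theorem stmt17 (m₁ m₂ m₃ : ℝ) (hm₁ : 0 < m₁) (hm₂ : 0 < m₂) (hm₃ : 0 < m₃)
    (z η : ℂ × ℂ × ℂ) (h12 : z.1 ≠ 0) (h31 : z.2.1 ≠ 0) (h23 : z.2.2 ≠ 0) :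
    let Y : ℂ × ℂ × ℂ :=
      (η.1 / (2 * conj z.1), η.2.1 / (2 * conj z.2.1), η.2.2 / (2 * conj z.2.2))
    let ρ₁₂ : ℝ := Complex.normSq z.1
    let ρ₃₁ : ℝ := Complex.normSq z.2.1
    let ρ₂₃ : ℝ := Complex.normSq z.2.2
    let π₁ : ℂ := η.1 * conj z.2.1 - η.2.1 * conj z.1
    let π₂ : ℂ := η.2.2 * conj z.1 - η.1 * conj z.2.2
    let π₃ : ℂ := η.2.1 * conj z.2.2 - η.2.2 * conj z.2.1
    KE m₁ m₂ m₃ Y =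
      Complex.normSq π₁ / (8 * m₁ * ρ₁₂ * ρ₃₁) +
      Complex.normSq π₂ / (8 * m₂ * ρ₁₂ * ρ₂₃) +
      Complex.normSq π₃ / (8 * m₃ * ρ₃₁ * ρ₂₃) := by
  intro Y ρ₁₂ ρ₃₁ ρ₂₃ π₁ π₂ π₃
  have hc12 : conj z.1 ≠ 0 := by simpa using h12
  have hc31 : conj z.2.1 ≠ 0 := by simpa using h31
  have hc23 : conj z.2.2 ≠ 0 := by simpa using h23
  have hρ12 : ρ₁₂ ≠ 0 := (Complex.normSq_pos.mpr h12).ne'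
  have hρ31 : ρ₃₁ ≠ 0 := (Complex.normSq_pos.mpr h31).ne'
  have hρ23 : ρ₂₃ ≠ 0 := (Complex.normSq_pos.mpr h23).ne'
  have e1 : Y.1 - Y.2.1 = π₁ / (2 * conj z.1 * conj z.2.1) :=
    lc_diff _ _ _ _ hc12 hc31
  have e2 : Y.2.2 - Y.1 = π₂ / (2 * conj z.2.2 * conj z.1) :=
    lc_diff _ _ _ _ hc23 hc12
  have e3 : Y.2.1 - Y.2.2 = π₃ / (2 * conj z.2.1 * conj z.2.2) :=
    lc_diff _ _ _ _ hc31 hc23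
  rw [KE, e1, e2, e3]
  simp only [Complex.normSq_div, Complex.normSq_mul, Complex.normSq_conj,
    show normSq (2:ℂ) = 4 from by norm_num [Complex.normSq]]
  simp only [ρ₁₂, ρ₃₁, ρ₂₃] at hρ12 hρ31 hρ23 ⊢
  field_simp
  ring
end
end

section
/- Let z ∈ C with z₁₂, z₃₁, z₂₃ all nonzero and let v, w ∈ ℂ³ be tangent to C at z, i.e. z₁₂v₁₂ + z₃₁v₃₁ + z₂₃v₂₃ = 0 and z₁₂w₁₂ + z₃₁w₃₁ + z₂₃w₂₃ = 0. Set X = (z₁₂², z₃₁², z₂₃²) ∈ W, Dv = (2z₁₂v₁₂, 2z₃₁v₃₁, 2z₂₃v₂₃), Dw = (2z₁₂w₁₂, 2z₃₁w₃₁, 2z₂₃w₂₃), ρᵢⱼ = |zᵢⱼ|², ‖z‖² = ρ₁₂+ρ₃₁+ρ₂₃, and λ(z) = 4·m₁m₂m₃·ρ₁₂ρ₃₁ρ₂₃·‖z‖²/(m·|X|⁴), where |X| is the mass norm. Then the pull-back of the Fubini–Study metric of the mass metric equals λ(z) times the Fubini–Study metric of the standard Hermitian metric: (⟨Dv,Dw⟩ₘ·|X|²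 − ⟨Dv,X⟩ₘ·⟨X,Dw⟩ₘ)/|X|⁴ = λ(z)·(⟨v,w⟩₂·‖z‖² − ⟨v,z⟩₂·⟨z,w⟩₂)/‖z‖⁴. -/
noncomputable section
open Complex ComplexConjugate

/-- Standard Hermitian inner product on ℂ³. -/
def stdInner (v w : ℂ × ℂ × ℂ) : ℂ :=
  conj v.1 * w.1 + conj v.2.1 * w.2.1 + conj v.2.2 * w.2.2

theorem keyPoly (m1 m2 m3 a b c A B C v1 v2 v3 V1 V2 V3 w1 w2 w3 : ℂ)
    (hg1 : a^2 + b^2 + c^2 = 0) (hg2 : A^2 + B^2 + C^2 = 0)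
    (hg3 : a*v1 + b*v2 + c*v3 = 0)
    (hg4 : a*w1 + b*w2 + c*w3 = 0) (hg5 : A*V1 + B*V2 + C*V3 = 0) :
    (A*a + B*b + C*c) *
      ((m1*m2*(A*a)*(V1*w1) + m3*m1*(B*b)*(V2*w2) + m2*m3*(C*c)*(V3*w3)) *
        (m1*m2*(A*a)^2 + m3*m1*(B*b)^2 + m2*m3*(C*c)^2)
      - (m1*m2*(A*a)*(a*V1) + m3*m1*(B*b)*(b*V2) + m2*m3*(C*c)*(c*V3)) *
        (m1*m2*(A*a)*(A*w1) + m3*m1*(B*b)*(B*w2) + m2*m3*(C*c)*(C*w3)))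
    = (m1+m2+m3)*m1*m2*m3*((A*a)*((B*b)*(C*c))) *
      ((V1*w1 + V2*w2 + V3*w3)*(A*a + B*b + C*c)
        - (V1*a + V2*b + V3*c)*(A*w1 + B*w2 + C*w3)) := by
    linear_combination (- b^2 * c * B * C^3 * V2 * m1 * m2 * m3^2 + b^2 * c * B^2 * C^2 * V3 * m1 * m2 * m3^2 - b^3 * B^2 * C^2 * V2 * m1 * m2 * m3^2 + b^3 * B^3 * C * V3 * m1 * m2 * m3^2 + a * b^2 * A * B * C^2 * V2 * m1 * m2^2 * m3 + a * b^2 * A * B * C^2 * V2 * m1^2 * m2 * m3 - a * b^2 * A * B^2 * C * V3 * m1 * m2^2 * m3 - a * b^2 * A * B^2 * C * V3 * m1^2 * m2 * m3 - a^2 * c * A * C^3 * V1 * m1 * m2^2 * m3 + a^2 * c * A^2 * C^2 * V3 * m1 * m2^2 * m3 + a^2 * b * A * B * C^2 * V1 * m1 * m2 * m3^2 + a^2 * b * A * B * C^2 * V1 * m1^2 * m2 * m3 - a^2 * b * A^2 * B * C * V3 * m1 * m2 * m3^2 - a^2 * b * A^2 * B * C * V3 * m1^2 * m2 * m3 - a^3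 * A^2 * C^2 * V1 * m1 * m2^2 * m3 + a^3 * A^3 * C * V3 * m1 * m2^2 * m3) * hg4 +
    (- b * c^3 * B^2 * C * w2 * m1 * m2 * m3^2 - b^2 * c^2 * B^3 * w2 * m1 * m2 * m3^2 - b^3 * c * B^2 * C * w2 * m1 * m2 * m3^2 - b^4 * B^3 * w2 * m1 * m2 * m3^2 - a * c^3 * A^2 * C * w1 * m1 * m2^2 * m3 + a * b * c^2 * A * B^2 * w2 * m1 * m2^2 * m3 + a * b * c^2 * A * B^2 * w2 * m1^2 * m2 * m3 + a * b * c^2 * A^2 * B * w1 * m1 * m2 * m3^2 + a * b * c^2 * A^2 * B * w1 * m1^2 * m2 * m3 - a * b^2 * c * B^2 * C * w1 * m1 * m2 * m3^2 - a * b^3 * B^3 * w1 * m1 * m2 * m3^2 + a * b^3 * A * B^2 * w2 * m1 * m2^2 * m3 + a * b^3 * A * B^2 * w2 * m1^2 * m2 * m3 - a^2 * c^2 * A^3 * w1 * m1 * m2^2 * m3 - a^2 * b * c * A^2 * C * w2 * m1 * m2^2 * m3 + a^2 * b^2 * A * B^2 * w1 * m1 * m2^2 * m3 + a^2 * b^2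 * A * B^2 * w1 * m1^2 * m2 * m3 + a^2 * b^2 * A^2 * B * w2 * m1 * m2 * m3^2 + a^2 * b^2 * A^2 * B * w2 * m1^2 * m2 * m3 - a^3 * c * A^2 * C * w1 * m1 * m2^2 * m3 + a^3 * b * A^2 * B * w1 * m1 * m2 * m3^2 + a^3 * b * A^2 * B * w1 * m1^2 * m2 * m3 - a^3 * b * A^3 * w2 * m1 * m2^2 * m3 - a^4 * A^3 * w1 * m1 * m2^2 * m3) * hg5 +
    (b * c * B * C^3 * V2 * w2 * m1 * m2 * m3^2 + b * c * B^3 * C * V2 * w2 * m1 * m2 * m3^2 + b * c * A * B^2 * C * V1 * w2 * m1 * m2 * m3^2 + b^2 * B^2 * C^2 * V2 * w2 * m1 * m2 * m3^2 + b^2 * B^4 * V2 * w2 * m1 * m2 * m3^2 + b^2 * A * B^3 * V1 * w2 * m1 * m2 * m3^2 + a * c * A * C^3 * V1 * w1 * m1 * m2^2 * m3 + a * c * A^2 * B * C * V2 * w1 * m1 * m2^2 * m3 + a * c * A^3 * C * V1 * w1 * m1 * m2^2 * m3 - a * b * A * B * C^2 * V2 * w2 * m1 * m2^2 * m3 - a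 * b * A * B * C^2 * V2 * w2 * m1^2 * m2 * m3 - a * b * A * B * C^2 * V1 * w1 * m1 * m2 * m3^2 - a * b * A * B * C^2 * V1 * w1 * m1^2 * m2 * m3 - a * b * A * B^3 * V2 * w2 * m1 * m2^2 * m3 - a * b * A * B^3 * V2 * w2 * m1^2 * m2 * m3 - a * b * A^2 * B^2 * V2 * w1 * m1 * m2 * m3^2 - a * b * A^2 * B^2 * V2 * w1 * m1^2 * m2 * m3 - a * b * A^2 * B^2 * V1 * w2 * m1 * m2^2 * m3 - a * b * A^2 * B^2 * V1 * w2 * m1^2 * m2 * m3 - a * b * A^3 * B * V1 * w1 * m1 * m2 * m3^2 - a * b * A^3 * B * V1 * w1 * m1^2 * m2 * m3 + a^2 * A^2 * C^2 * V1 * w1 * m1 * m2^2 * m3 + a^2 * A^3 * B * V2 * w1 * m1 * m2^2 * m3 + a^2 * A^4 * V1 * w1 * m1 * m2^2 * m3) * hg1 +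
    (a * b^2 * c * B * C * V2 * w1 * m1 * m2 * m3^2 - a * b^2 * c * A * C * V1 * w1 * m1 * m2^2 * m3 + a * b^3 * B^2 * V2 * w1 * m1 * m2 * m3^2 + a * b^3 * A * B * V1 * w1 * m1 * m2 * m3^2 + a * b^3 * A * B * V1 * w1 * m1^2 * m2 * m3 - a^2 * b * c * B * C * V2 * w2 * m1 * m2 * m3^2 + a^2 * b * c * A * C * V1 * w2 * m1 * m2^2 * m3 - a^2 * b^2 * B^2 * V2 * w2 * m1 * m2 * m3^2 - a^2 * b^2 * A * B * V2 * w1 * m1 * m2^2 * m3 - a^2 * b^2 * A * B * V2 * w1 * m1^2 * m2 * m3 - a^2 * b^2 * A * B * V1 * w2 * m1 * m2 * m3^2 - a^2 * b^2 * A * B * V1 * w2 * m1^2 * m2 * m3 - a^2 * b^2 * A^2 * V1 * w1 * m1 * m2^2 * m3 + a^3 * b * A * B * V2 * w2 * m1 * m2^2 * m3 + a^3 * b * A * B * V2 * w2 * m1^2 * m2 * m3 + a^3 * b * A^2 * V1 * w2 * m1 * m2^2 * m3) * hg2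

theorem stmt18aux (m1 m2 m3 : ℝ) (hm1 : 0 < m1) (hm2 : 0 < m2) (hm3 : 0 < m3)
    (a b c v1 v2 v3 w1 w2 w3 : ℂ)
    (hC : a ^ 2 + b ^ 2 + c ^ 2 = 0)
    (ha : a ≠ 0) (hb : b ≠ 0) (hc : c ≠ 0)
    (hv : a * v1 + b * v2 + c * v3 = 0)
    (hw : a * w1 + b * w2 + c * w3 = 0) :
    (massInner m1 m2 m3 (2*a*v1, 2*b*v2, 2*c*v3) (2*a*w1, 2*b*w2, 2*c*w3) *
        ((massSq m1 m2 m3 (a^2, b^2, c^2) : ℝ) : ℂ) -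
      massInner m1 m2 m3 (2*a*v1, 2*b*v2, 2*c*v3) (a^2, b^2, c^2) *
        massInner m1 m2 m3 (a^2, b^2, c^2) (2*a*w1, 2*b*w2, 2*c*w3)) /
      ((massSq m1 m2 m3 (a^2, b^2, c^2) : ℝ) : ℂ) ^ 2
    = ((4 * m1 * m2 * m3 * Complex.normSq a * Complex.normSq b * Complex.normSq c *
          (Complex.normSq a + Complex.normSq b + Complex.normSq c) /
          ((m1 + m2 + m3) * (massSq m1 m2 m3 (a^2, b^2, c^2)) ^ 2) : ℝ) : ℂ) *
        ((stdInner (v1,v2,v3) (w1,w2,w3) *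
            ((Complex.normSq a + Complex.normSq b + Complex.normSq c : ℝ) : ℂ) -
          stdInner (v1,v2,v3) (a,b,c) * stdInner (a,b,c) (w1,w2,w3)) /
          ((Complex.normSq a + Complex.normSq b + Complex.normSq c : ℝ) : ℂ) ^ 2) := by
  have hm : (0:ℝ) < m1 + m2 + m3 := by linarith
  have hMc : ((m1 + m2 + m3 : ℝ) : ℂ) ≠ 0 := by
    exact_mod_cast ne_of_gt hm
  have hMc' : ((m1:ℂ) + m2 + m3) ≠ 0 := by push_cast at hMc ⊢; exact hMc
  have hρa : 0 < Complex.normSq a := Complex.normSq_pos.2 ha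
  have hρb : 0 < Complex.normSq b := Complex.normSq_pos.2 hb
  have hρc : 0 < Complex.normSq c := Complex.normSq_pos.2 hc
  have hNr : (0:ℝ) < m1*m2*(Complex.normSq a)^2 + m3*m1*(Complex.normSq b)^2
      + m2*m3*(Complex.normSq c)^2 := by positivity
  have hNc : ((m1*m2*(Complex.normSq a)^2 + m3*m1*(Complex.normSq b)^2
      + m2*m3*(Complex.normSq c)^2 : ℝ) : ℂ) = ((m1:ℂ)*m2*(conj a*a)^2 + (m3:ℂ)*m1*(conj b*b)^2 + (m2:ℂ)*m3*(conj c*c)^2) := by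
    push_cast [Complex.normSq_eq_conj_mul_self]; ring
  have hNne : ((m1:ℂ)*m2*(conj a*a)^2 + (m3:ℂ)*m1*(conj b*b)^2 + (m2:ℂ)*m3*(conj c*c)^2) ≠ 0 := by
    rw [← hNc]; exact_mod_cast ne_of_gt hNr
  have hNZc : ((Complex.normSq a + Complex.normSq b + Complex.normSq c : ℝ) : ℂ) = (conj a*a + conj b*b + conj c*c) := by
    push_cast [Complex.normSq_eq_conj_mul_self]; ring
  have hNZne : (conj a*a + conj b*b + conj c*c) ≠ 0 := by
    rw [← hNZc]
    exact_mod_cast ne_of_gt (by positivity : (0:ℝ) < Complex.normSq a + Complex.normSq b + Complex.normSq c)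
  have hmassSqc : ((massSq m1 m2 m3 (a^2, b^2, c^2) : ℝ) : ℂ) = ((m1:ℂ)*m2*(conj a*a)^2 + (m3:ℂ)*m1*(conj b*b)^2 + (m2:ℂ)*m3*(conj c*c)^2) / ((m1+m2+m3:ℝ):ℂ) := by
    simp only [massSq]
    push_cast [Complex.normSq_eq_conj_mul_self, map_pow]
    field_simp
    try ring
  have hg2 : (conj a) ^ 2 + (conj b) ^ 2 + (conj c) ^ 2 = 0 := by
    have h := congrArg (starRingEnd ℂ) hC
    simpa [map_add, map_pow] using h
  have hg5 : conj a * conj v1 + conj b * conj v2 + conj c * conj v3 = 0 := by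
    have h := congrArg (starRingEnd ℂ) hv
    simpa [map_add, map_mul] using h
  have key := keyPoly (m1:ℂ) (m2:ℂ) (m3:ℂ) a b c (conj a) (conj b) (conj c)
      v1 v2 v3 (conj v1) (conj v2) (conj v3) w1 w2 w3 hC hg2 hv hw hg5
  have hL : (massInner m1 m2 m3 (2*a*v1, 2*b*v2, 2*c*v3) (2*a*w1, 2*b*w2, 2*c*w3) *
        ((massSq m1 m2 m3 (a^2, b^2, c^2) : ℝ) : ℂ) -
      massInner m1 m2 m3 (2*a*v1, 2*b*v2, 2*c*v3) (a^2, b^2, c^2) *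
        massInner m1 m2 m3 (a^2, b^2, c^2) (2*a*w1, 2*b*w2, 2*c*w3)) /
      ((massSq m1 m2 m3 (a^2, b^2, c^2) : ℝ) : ℂ) ^ 2
      = (4 * (((m1:ℂ)*m2*(conj a*a)*(conj v1*w1) + (m3:ℂ)*m1*(conj b*b)*(conj v2*w2) + (m2:ℂ)*m3*(conj c*c)*(conj v3*w3)) * ((m1:ℂ)*m2*(conj a*a)^2 + (m3:ℂ)*m1*(conj b*b)^2 + (m2:ℂ)*m3*(conj c*c)^2) - ((m1:ℂ)*m2*(conj a*a)*(a*conj v1) + (m3:ℂ)*m1*(conj b*b)*(b*conj v2) + (m2:ℂ)*m3*(conj c*c)*(c*conj v3)) * ((m1:ℂ)*m2*(conj a*a)*(conj a*w1) + (m3:ℂ)*m1*(conj b*b)*(conj b*w2) + (m2:ℂ)*m3*(conj c*c)*(conj c*w3)))) / ((m1:ℂ)*m2*(conj a*a)^2 + (m3:ℂ)*m1*(conj b*b)^2 + (m2:ℂ)*m3*(conj c*c)^2) ^ 2 := by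
    rw [hmassSqc]
    simp only [massInner]
    push_cast [map_mul, map_pow, map_ofNat]
    field_simp
    try ring
  have hR : ((4 * m1 * m2 * m3 * Complex.normSq a * Complex.normSq b * Complex.normSq c *
          (Complex.normSq a + Complex.normSq b + Complex.normSq c) /
          ((m1 + m2 + m3) * (massSq m1 m2 m3 (a^2, b^2, c^2)) ^ 2) : ℝ) : ℂ) *
        ((stdInner (v1,v2,v3) (w1,w2,w3) *
            ((Complex.normSq a + Complex.normSq b + Complex.normSq c : ℝ) : ℂ) -
          stdInner (v1,v2,v3) (a,b,c) * stdInner (a,b,c) (w1,w2,w3)) /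
          ((Complex.normSq a + Complex.normSq b + Complex.normSq c : ℝ) : ℂ) ^ 2)
      = (4 * ((m1:ℂ)+m2+m3) * m1 * m2 * m3 * (conj a*a) * (conj b*b) * (conj c*c) *
          ((conj v1*w1 + conj v2*w2 + conj v3*w3) * (conj a*a + conj b*b + conj c*c) - (conj v1*a + conj v2*b + conj v3*c) * (conj a*w1 + conj b*w2 + conj c*w3))) / (((m1:ℂ)*m2*(conj a*a)^2 + (m3:ℂ)*m1*(conj b*b)^2 + (m2:ℂ)*m3*(conj c*c)^2) ^ 2 * (conj a*a + conj b*b + conj c*c)) := by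
    simp only [stdInner]
    rw [Complex.ofReal_div]
    push_cast [Complex.normSq_eq_conj_mul_self]
    rw [hmassSqc]
    field_simp
    push_cast
    try ring
  rw [hL, hR, div_eq_div_iff (pow_ne_zero 2 hNne) (mul_ne_zero (pow_ne_zero 2 hNne) hNZne)]
  linear_combination (4 * ((m1:ℂ)*m2*(conj a*a)^2 + (m3:ℂ)*m1*(conj b*b)^2 + (m2:ℂ)*m3*(conj c*c)^2) ^ 2) * key

/-- the pull-back under the squaring map of the Fubini–Study metric of
the mass metric is `λ(z)` times the Fubini–Study metric of the standard Hermitian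
metric on the cone `C`. -/
theorem stmt18 (m₁ m₂ m₃ : ℝ) (hm₁ : 0 < m₁) (hm₂ : 0 < m₂) (hm₃ : 0 < m₃)
    (z v w : ℂ × ℂ × ℂ)
    (hC : z.1 ^ 2 + z.2.1 ^ 2 + z.2.2 ^ 2 = 0)
    (h12 : z.1 ≠ 0) (h31 : z.2.1 ≠ 0) (h23 : z.2.2 ≠ 0)
    (hv : z.1 * v.1 + z.2.1 * v.2.1 + z.2.2 * v.2.2 = 0)
    (hw : z.1 * w.1 + z.2.1 * w.2.1 + z.2.2 * w.2.2 = 0) :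
    let X : ℂ × ℂ × ℂ := (z.1 ^ 2, z.2.1 ^ 2, z.2.2 ^ 2)
    let Dv : ℂ × ℂ × ℂ := (2 * z.1 * v.1, 2 * z.2.1 * v.2.1, 2 * z.2.2 * v.2.2)
    let Dw : ℂ × ℂ × ℂ := (2 * z.1 * w.1, 2 * z.2.1 * w.2.1, 2 * z.2.2 * w.2.2)
    let ρ₁₂ : ℝ := Complex.normSq z.1
    let ρ₃₁ : ℝ := Complex.normSq z.2.1
    let ρ₂₃ : ℝ := Complex.normSq z.2.2
    let nz : ℝ := ρ₁₂ + ρ₃₁ + ρ₂₃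
    let nX : ℝ := massSq m₁ m₂ m₃ X
    let lam : ℝ := 4 * m₁ * m₂ * m₃ * ρ₁₂ * ρ₃₁ * ρ₂₃ * nz / ((m₁ + m₂ + m₃) * nX ^ 2)
    (massInner m₁ m₂ m₃ Dv Dw * (nX : ℂ) -
        massInner m₁ m₂ m₃ Dv X * massInner m₁ m₂ m₃ X Dw) / (nX : ℂ) ^ 2
      = (lam : ℂ) *
        ((stdInner v w * (nz : ℂ) - stdInner v z * stdInner z w) / (nz : ℂ) ^ 2) := by
  intro X Dv Dw ρ₁₂ ρ₃₁ ρ₂₃ nz nX lam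
  have h := stmt18aux m₁ m₂ m₃ hm₁ hm₂ hm₃ z.1 z.2.1 z.2.2 v.1 v.2.1 v.2.2
      w.1 w.2.1 w.2.2 hC h12 h31 h23 hv hw
  exact h
end
end

section
/- Let z ∈ C with z₁₂, z₃₁, z₂₃ all nonzero and let η ∈ ℂ³ satisfy ⟨η,z⟩₂ = 0. Define Y = (η₁₂/(2·conj(z₁₂)), η₃₁/(2·conj(z₃₁)), η₂₃/(2·conj(z₂₃))), X = (z₁₂², z₃₁², z₂₃²) ∈ W, ρᵢⱼ = |zᵢⱼ|², ‖z‖² = ρ₁₂+ρ₃₁+ρ₂₃, and λ(z) = 4·m₁m₂m₃·ρ₁₂ρ₃₁ρ₂₃·‖z‖²/(m·|X|⁴), where |X| is the mass norm. Then the pulled-back shape kinetic energy equals λ(z)⁻¹ times the Fubini–Study conorm on the cone: 2·|X|²·K(Y) = (1/λ(z))·|⟨η, z × conj(z)⟩₂|²/‖z‖², where z × conj(z) denotes the complex-bilinear cross product of z with its componentwise conjugate. -/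
noncomputable section
open Complex ComplexConjugate

/-- the pulled-back shape kinetic energy equals `λ(z)⁻¹` times the
Fubini–Study conorm on the cone:
`2|X|²K(Y) = (1/λ(z))·|⟨η, z × conj z⟩₂|²/‖z‖²`. -/
theorem stmt19 (m₁ m₂ m₃ : ℝ) (hm₁ : 0 < m₁) (hm₂ : 0 < m₂) (hm₃ : 0 < m₃)
    (z η : ℂ × ℂ × ℂ)
    (hC : z.1 ^ 2 + z.2.1 ^ 2 + z.2.2 ^ 2 = 0)
    (h12 : z.1 ≠ 0) (h31 : z.2.1 ≠ 0) (h23 : z.2.2 ≠ 0)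
    (hη : stdInner η z = 0) :
    let Y : ℂ × ℂ × ℂ :=
      (η.1 / (2 * conj z.1), η.2.1 / (2 * conj z.2.1), η.2.2 / (2 * conj z.2.2))
    let X : ℂ × ℂ × ℂ := (z.1 ^ 2, z.2.1 ^ 2, z.2.2 ^ 2)
    let ρ₁₂ : ℝ := Complex.normSq z.1
    let ρ₃₁ : ℝ := Complex.normSq z.2.1
    let ρ₂₃ : ℝ := Complex.normSq z.2.2
    let nz : ℝ := ρ₁₂ + ρ₃₁ + ρ₂₃
    let nX : ℝ := massSq m₁ m₂ m₃ X
    let lam : ℝ := 4 * m₁ * m₂ * m₃ * ρ₁₂ * ρ₃₁ * ρ₂₃ * nz / ((m₁ + m₂ + m₃) * nX ^ 2)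
    2 * nX * KE m₁ m₂ m₃ Y =
      (1 / lam) *
        (Complex.normSq (stdInner η (ccross z (conj z.1, conj z.2.1, conj z.2.2))) / nz) := by
  intro Y X ρ₁₂ ρ₃₁ ρ₂₃ nz nX lam
  obtain ⟨a, b, c⟩ := z
  obtain ⟨p, q, r⟩ := η
  simp only [stdInner, ccross] at hη ⊢
  simp only at hC h12 h31 h23
  set D : ℂ := conj p * (b * conj c - c * conj b) + conj q * (c * conj a - a * conj c) +
      conj r * (a * conj b - b * conj a) with hD
  have hA : conj a ≠ 0 := by simpa using h12
  have hB : conj b ≠ 0 := by simpa using h31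
  have hCc : conj c ≠ 0 := by simpa using h23
  have hN : a * conj a + b * conj b + c * conj c = ((nz : ℝ) : ℂ) := by
    simp only [nz, ρ₁₂, ρ₃₁, ρ₂₃]
    push_cast
    rw [Complex.mul_conj, Complex.mul_conj, Complex.mul_conj]
  have hDa : D * a = ((nz : ℝ) : ℂ) * (conj q * c - conj r * b) := by
    rw [← hN, hD]
    linear_combination (b * conj c - c * conj b) * hη +
      (conj r * conj b - conj q * conj c) * hC
  have hDb : D * b = ((nz : ℝ) : ℂ) * (conj r * a - conj p * c) := by
    rw [← hN, hD]
    linear_combination (c * conj a - a * conj c) * hη +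
      (conj p * conj c - conj r * conj a) * hC
  have hDc : D * c = ((nz : ℝ) : ℂ) * (conj p * b - conj q * a) := by
    rw [← hN, hD]
    linear_combination (a * conj b - b * conj a) * hη +
      (conj q * conj a - conj p * conj b) * hC
  -- normSq consequences
  have hSa : Complex.normSq D * ρ₁₂ = nz ^ 2 * Complex.normSq (conj q * c - conj r * b) := by
    have := congrArg Complex.normSq hDa
    simpa [Complex.normSq_mul, Complex.normSq_ofReal, ρ₁₂, sq] using this
  have hSb : Complex.normSq D * ρ₃₁ = nz ^ 2 * Complex.normSq (conj r * a - conj p * c) := by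
    have := congrArg Complex.normSq hDb
    simpa [Complex.normSq_mul, Complex.normSq_ofReal, ρ₃₁, sq] using this
  have hSc : Complex.normSq D * ρ₂₃ = nz ^ 2 * Complex.normSq (conj p * b - conj q * a) := by
    have := congrArg Complex.normSq hDc
    simpa [Complex.normSq_mul, Complex.normSq_ofReal, ρ₂₃, sq] using this
  have h2 : Complex.normSq 2 = 4 := by norm_num [Complex.normSq_apply]
  -- kinetic energy terms
  have k1 : Complex.normSq (Y.1 - Y.2.1) =
      Complex.normSq (conj p * b - conj q * a) / (4 * (ρ₁₂ * ρ₃₁)) := by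
    have e : Y.1 - Y.2.1 = (p * conj b - q * conj a) / (2 * (conj a * conj b)) := by
      simp only [Y]
      field_simp
    rw [e, Complex.normSq_div, ← Complex.normSq_conj (p * conj b - q * conj a)]
    simp only [map_sub, map_mul, Complex.conj_conj, Complex.normSq_mul, Complex.normSq_conj, h2]
    rfl
  have k2 : Complex.normSq (Y.2.2 - Y.1) =
      Complex.normSq (conj r * a - conj p * c) / (4 * (ρ₂₃ * ρ₁₂)) := by
    have e : Y.2.2 - Y.1 = (r * conj a - p * conj c) / (2 * (conj c * conj a)) := by
      simp only [Y]
      field_simp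
    rw [e, Complex.normSq_div, ← Complex.normSq_conj (r * conj a - p * conj c)]
    simp only [map_sub, map_mul, Complex.conj_conj, Complex.normSq_mul, Complex.normSq_conj, h2]
    rfl
  have k3 : Complex.normSq (Y.2.1 - Y.2.2) =
      Complex.normSq (conj q * c - conj r * b) / (4 * (ρ₃₁ * ρ₂₃)) := by
    have e : Y.2.1 - Y.2.2 = (q * conj c - r * conj b) / (2 * (conj b * conj c)) := by
      simp only [Y]
      field_simp
    rw [e, Complex.normSq_div, ← Complex.normSq_conj (q * conj c - r * conj b)]
    simp only [map_sub, map_mul, Complex.conj_conj, Complex.normSq_mul, Complex.normSq_conj, h2]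
    rfl
  -- positivity facts
  have hρa : 0 < ρ₁₂ := Complex.normSq_pos.mpr h12
  have hρb : 0 < ρ₃₁ := Complex.normSq_pos.mpr h31
  have hρc : 0 < ρ₂₃ := Complex.normSq_pos.mpr h23
  have hnz : 0 < nz := by positivity
  have hm : 0 < m₁ + m₂ + m₃ := by positivity
  have hnz2 : (nz : ℝ) ^ 2 ≠ 0 := by positivity
  have hSa' : Complex.normSq (conj q * c - conj r * b) = Complex.normSq D * ρ₁₂ / nz ^ 2 := by
    rw [eq_div_iff hnz2]; linear_combination -hSa
  have hSb' : Complex.normSq (conj r * a - conj p * c) = Complex.normSq D * ρ₃₁ / nz ^ 2 := by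
    rw [eq_div_iff hnz2]; linear_combination -hSb
  have hSc' : Complex.normSq (conj p * b - conj q * a) = Complex.normSq D * ρ₂₃ / nz ^ 2 := by
    rw [eq_div_iff hnz2]; linear_combination -hSc
  have hnX' : nX = (m₁ * m₂ * ρ₁₂ ^ 2 + m₃ * m₁ * ρ₃₁ ^ 2 + m₂ * m₃ * ρ₂₃ ^ 2) / (m₁ + m₂ + m₃) := by
    simp only [nX, massSq, X, ρ₁₂, ρ₃₁, ρ₂₃, map_pow]
  simp only [KE, k1, k2, k3, hSa', hSb', hSc', lam, hnX']
  have e1 : m₁ ≠ 0 := hm₁.ne'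
  have e2 : m₂ ≠ 0 := hm₂.ne'
  have e3 : m₃ ≠ 0 := hm₃.ne'
  have e4 : ρ₁₂ ≠ 0 := hρa.ne'
  have e5 : ρ₃₁ ≠ 0 := hρb.ne'
  have e6 : ρ₂₃ ≠ 0 := hρc.ne'
  have e7 : nz ≠ 0 := hnz.ne'
  have e8 : m₁ + m₂ + m₃ ≠ 0 := hm.ne'
  field_simp
  ring
end
end
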